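/- arXiv:1509.03910 — 9 statements merged into one kernel-verified Lean document; each statement's English description precedes it below -/
import Mathlib

section
/- Let p be a prime and r ≥ 1. Suppose a_0, ..., a_{r-1} are natural numbers, not all zero, such that (p^r - 1) divides the sum over k of p^k * a_k. Then the sum over k of a_k is at least r(p-1). Moreover, if equality holds, then a_k = p - 1 for all k. -/
lemma geom_aux (p : ℕ) (hp : 1 ≤ p) (n : ℕ) :
    ∑ k ∈ Finset.range n, p ^ k * (p - 1) = p ^ n - 1 := by
  induction n with
  | zero => simp
  | succ n ih =>
    rw [Finset.sum_range_succ, ih, pow_succ]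
    have h1 : 1 ≤ p ^ n := Nat.one_le_pow _ _ hp
    have h2 : p ^ n * (p - 1) = p ^ n * p - p ^ n := by
      rw [Nat.mul_sub, mul_one]
    have h3 : p ^ n ≤ p ^ n * p := Nat.le_mul_of_pos_right _ hp
    omega

/-- Quillen's lemma: if `a_0, ..., a_{r-1}` are natural numbers, not all zero, such that
`p^r - 1` divides `∑ p^k * a_k`, then `∑ a_k ≥ r * (p - 1)`, with equality forcing
`a_k = p - 1` for all `k`. -/
theorem stmt_0 (p r : ℕ) (hp : p.Prime) (hr : 1 ≤ r) (a : Fin r → ℕ)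
    (hne : ∃ k, a k ≠ 0)
    (hdvd : (p ^ r - 1) ∣ ∑ k : Fin r, p ^ (k : ℕ) * a k) :
    r * (p - 1) ≤ ∑ k, a k ∧
      (∑ k, a k = r * (p - 1) → ∀ k, a k = p - 1) := by
  have hp2 : 2 ≤ p := hp.two_le
  haveI : NeZero r := ⟨by omega⟩
  suffices H : ∀ n, ∀ a : Fin r → ℕ, (∃ k, a k ≠ 0) →
      (p ^ r - 1) ∣ ∑ k : Fin r, p ^ (k : ℕ) * a k → ∑ k, a k = n →
      r * (p - 1) ≤ n ∧ (n = r * (p - 1) → ∀ k, a k = p - 1) by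
    exact H (∑ k, a k) a hne hdvd rfl
  intro n
  induction n using Nat.strong_induction_on with
  | _ n IH =>
    intro a hne hdvd hsum
    by_cases hcase : ∀ k, a k < p
    · -- all digits are < p : weighted sum is exactly p^r - 1
      set S := ∑ k : Fin r, p ^ (k : ℕ) * a k with hS
      have hSpos : 0 < S := by
        obtain ⟨k, hk⟩ := hne
        exact Finset.sum_pos' (fun i _ => Nat.zero_le _)
          ⟨k, Finset.mem_univ k, Nat.mul_pos (pow_pos hp.pos _) (Nat.pos_of_ne_zero hk)⟩
      have hle : ∀ i ∈ (Finset.univ : Finset (Fin r)), p ^ (i : ℕ) * a i ≤ p ^ (i : ℕ) * (p - 1) := by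
        intro i _
        exact Nat.mul_le_mul_left _ (by have := hcase i; omega)
      have hgeom : ∑ k : Fin r, p ^ (k : ℕ) * (p - 1) = p ^ r - 1 := by
        rw [Fin.sum_univ_eq_sum_range (fun k => p ^ k * (p - 1)) r]
        exact geom_aux p (by omega) r
      have hSle : S ≤ p ^ r - 1 := by
        rw [← hgeom]; exact Finset.sum_le_sum hle
      have hSge : p ^ r - 1 ≤ S := Nat.le_of_dvd hSpos hdvd
      have hSeq : S = ∑ k : Fin r, p ^ (k : ℕ) * (p - 1) := by omega
      have hterm : ∀ i ∈ (Finset.univ : Finset (Fin r)), p ^ (i : ℕ) * a i = p ^ (i : ℕ) * (p - 1) :=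
        ((Finset.sum_eq_sum_iff_of_le hle).mp hSeq.symm.symm)
      have hak : ∀ k, a k = p - 1 := by
        intro k
        exact Nat.eq_of_mul_eq_mul_left (pow_pos hp.pos _) (hterm k (Finset.mem_univ k))
      have hsum' : ∑ k, a k = r * (p - 1) := by
        calc ∑ k, a k = ∑ _k : Fin r, (p - 1) := by
              exact Finset.sum_congr rfl (fun k _ => hak k)
          _ = r * (p - 1) := by simp [Finset.sum_const, Finset.card_univ, mul_comm]
      constructor
      · omega
      · intro _; exact hak
    · -- some a j ≥ p : perform a carry
      push_neg at hcase
      obtain ⟨j, hj⟩ := hcase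
      set b : Fin r → ℕ :=
        fun k => (if k = j then a k - p else a k) + (if k = j + 1 then 1 else 0) with hb
      -- sum of b
      have hsb : (∑ k, b k) + p = n + 1 := by
        have h1 : ∑ k, b k = (∑ k : Fin r, (if k = j then a k - p else a k)) +
            ∑ k : Fin r, (if k = j + 1 then 1 else 0) := by
          rw [hb, Finset.sum_add_distrib]
        have h2 : (∑ k : Fin r, (if k = j + 1 then (1:ℕ) else 0)) = 1 := by
          simp
        have h3 : (∑ k : Fin r, (if k = j then a k - p else a k)) + p = n := by
          have : ∀ k : Fin r, (if k = j then a k - p else a k) + (if k = j then p else 0)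
              = a k := by
            intro k
            by_cases h : k = j
            · subst h; simp; omega
            · simp [h]
          calc (∑ k : Fin r, (if k = j then a k - p else a k)) + p
              = (∑ k : Fin r, (if k = j then a k - p else a k)) +
                ∑ k : Fin r, (if k = j then p else 0) := by simp
            _ = ∑ k : Fin r, ((if k = j then a k - p else a k) + (if k = j then p else 0)) := by
                rw [Finset.sum_add_distrib]
            _ = ∑ k, a k := Finset.sum_congr rfl (fun k _ => this k)
            _ = n := hsum
        omega
      -- weighted sum of b
      set S := ∑ k : Fin r, p ^ (k : ℕ) * a k with hS
      set T := ∑ k : Fin r, p ^ (k : ℕ) * b k with hT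
      have hTS : T + p ^ ((j : ℕ) + 1) = S + p ^ (((j + 1 : Fin r)) : ℕ) := by
        have h1 : T = (∑ k : Fin r, p ^ (k : ℕ) * (if k = j then a k - p else a k)) +
            ∑ k : Fin r, p ^ (k : ℕ) * (if k = j + 1 then 1 else 0) := by
          rw [hT, hb, ← Finset.sum_add_distrib]
          exact Finset.sum_congr rfl (fun k _ => by ring)
        have h2 : (∑ k : Fin r, p ^ (k : ℕ) * (if k = j + 1 then (1:ℕ) else 0))
            = p ^ (((j + 1 : Fin r)) : ℕ) := by
          simp
        have h3 : (∑ k : Fin r, p ^ (k : ℕ) * (if k = j then a k - p else a k)) +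
            p ^ ((j : ℕ) + 1) = S := by
          have key : ∀ k : Fin r, p ^ (k : ℕ) * (if k = j then a k - p else a k) +
              (if k = j then p ^ ((k : ℕ)) * p else 0) = p ^ (k : ℕ) * a k := by
            intro k
            by_cases h : k = j
            · subst h
              simp only [if_pos rfl, ite_true]
              rw [← Nat.mul_add, Nat.sub_add_cancel hj]
            · simp [h]
          calc (∑ k : Fin r, p ^ (k : ℕ) * (if k = j then a k - p else a k)) +
                p ^ ((j : ℕ) + 1)
              = (∑ k : Fin r, p ^ (k : ℕ) * (if k = j then a k - p else a k)) +
                ∑ k : Fin r, (if k = j then p ^ (k : ℕ) * p else 0) := by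
                  rw [Finset.sum_ite_eq' Finset.univ j (fun k => p ^ (k : ℕ) * p)]
                  simp [pow_succ]
            _ = ∑ k : Fin r, (p ^ (k : ℕ) * (if k = j then a k - p else a k) +
                (if k = j then p ^ (k : ℕ) * p else 0)) := by rw [Finset.sum_add_distrib]
            _ = S := Finset.sum_congr rfl (fun k _ => key k)
        omega
      -- divisibility for b
      have hmod : p ^ ((j : ℕ) + 1) ≡ p ^ (((j + 1 : Fin r)) : ℕ) [MOD p ^ r - 1] := by
        have hv : ((j + 1 : Fin r) : ℕ) = ((j : ℕ) + 1) % r := by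
          simp [Fin.add_def]
        by_cases h : (j : ℕ) + 1 < r
        · rw [hv, Nat.mod_eq_of_lt h]
        · have hjr : (j : ℕ) + 1 = r := by have := j.isLt; omega
          rw [hv, hjr, Nat.mod_self, pow_zero]
          have h1 : 1 ≤ p ^ r := Nat.one_le_pow _ _ hp.pos
          exact ((Nat.modEq_iff_dvd' h1).mpr (dvd_refl (p ^ r - 1))).symm
      have hTdvd : (p ^ r - 1) ∣ T := by
        have hS0 : S ≡ 0 [MOD p ^ r - 1] := (Nat.modEq_zero_iff_dvd).mpr hdvd
        have : T + p ^ ((j : ℕ) + 1) ≡ 0 + p ^ ((j : ℕ) + 1) [MOD p ^ r - 1] := by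
          rw [hTS]
          exact hS0.add hmod.symm
        exact (Nat.modEq_zero_iff_dvd).mp (Nat.ModEq.add_right_cancel' _ this)
      -- b is not all zero
      have hbne : ∃ k, b k ≠ 0 := by
        refine ⟨j + 1, ?_⟩
        have hb1 : b (j + 1) = (if j + 1 = j then a (j + 1) - p else a (j + 1)) + 1 := by
          simp [hb]
        rw [hb1]
        exact Nat.succ_ne_zero _
      -- apply IH
      have hlt : ∑ k, b k < n := by omega
      obtain ⟨h1, _⟩ := IH (∑ k, b k) hlt b hbne hTdvd rfl
      set M := r * (p - 1) with hM
      constructor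
      · omega
      · intro heq; exfalso; omega
end

section
/- Let R be a ℤ-graded commutative algebra over a field F of odd characteristic, and let x ∈ R with x_e its sum of even-degree homogeneous components. Then x is nilpotent if and only if x_e is nilpotent. -/
open scoped Classical DirectSum

/-- A finite sum of pairwise anticommuting square-zero elements is nilpotent. -/
lemma aux_nilp_sum {R : Type*} [Ring R] (f : ℤ → R) (S : Finset ℤ) :
    (∀ i ∈ S, ∀ j ∈ S, f i * f j = -(f j * f i)) →
    (∀ i ∈ S, f i * f i = 0) →
    (∑ i ∈ S, f i) ^ (2 ^ S.card) = 0 := by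
  induction S using Finset.cons_induction with
  | empty => intro _ _; simp
  | cons a s ha ih =>
    intro h1 h2
    set y := ∑ i ∈ s, f i with hy
    have hmema : a ∈ Finset.cons a s ha := Finset.mem_cons_self a s
    have hay : f a * y + y * f a = 0 := by
      rw [Finset.mul_sum, Finset.sum_mul, ← Finset.sum_add_distrib]
      apply Finset.sum_eq_zero
      intro i hi
      rw [h1 a hmema i (Finset.mem_cons_of_mem hi)]
      exact neg_add_cancel _
    have haa : f a * f a = 0 := h2 a hmema
    have hsq : (f a + y) ^ 2 = y ^ 2 := by
      have e : (f a + y) ^ 2 = f a * f a + (f a * y + y * f a) + y * y := by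
        noncomm_ring
      rw [e, haa, hay, zero_add, zero_add, sq]
    have hihy : y ^ (2 ^ s.card) = 0 :=
      ih (fun i hi j hj => h1 i (Finset.mem_cons_of_mem hi) j (Finset.mem_cons_of_mem hj))
        (fun i hi => h2 i (Finset.mem_cons_of_mem hi))
    rw [Finset.sum_cons, Finset.card_cons, pow_succ', pow_mul, hsq, ← pow_mul,
      mul_comm 2 (2 ^ s.card), pow_mul, hihy]
    simp

/-- In a ℤ-graded commutative algebra over a field of odd characteristic,
an element `x` is nilpotent if and only if the sum `x_e` of its even-degree
homogeneous components is nilpotent. -/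
theorem stmt_2 (F : Type*) [Field F] (hF : Odd (ringChar F))
    (R : Type*) [Ring R] [Algebra F R]
    (𝒜 : ℤ → Submodule F R) [GradedAlgebra 𝒜]
    (hcomm : ∀ (i j : ℤ) (x y : R), x ∈ 𝒜 i → y ∈ 𝒜 j →
      x * y = ((-1 : F) ^ (i * j)) • (y * x))
    (x xe : R)
    (hxe : xe = ∑ i ∈ (DirectSum.decompose 𝒜 x).support,
      if Even i then ((DirectSum.decompose 𝒜 x i : R)) else 0) :
    IsNilpotent x ↔ IsNilpotent xe := by
  classical
  set c : ℤ → R := fun i => (DirectSum.decompose 𝒜 x i : R) with hc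
  have hmem : ∀ i, c i ∈ 𝒜 i := fun i => SetLike.coe_mem _
  -- 2 ≠ 0 in F
  have h2F : (2 : F) ≠ 0 := by
    intro h
    have hd : ringChar F ∣ 2 := ringChar.dvd (by exact_mod_cast h)
    have h1 : ringChar F ≠ 1 := CharP.ringChar_ne_one
    rcases (Nat.dvd_prime Nat.prime_two).mp hd with h' | h'
    · exact h1 h'
    · rw [h'] at hF
      simp [Nat.odd_iff] at hF
  -- odd components square to zero
  have hsq : ∀ i : ℤ, ¬ Even i → c i * c i = 0 := by
    intro i hi
    have h := hcomm i i (c i) (c i) (hmem i) (hmem i)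
    have hodd : Odd (i * i) := (Int.not_even_iff_odd.mp hi).mul (Int.not_even_iff_odd.mp hi)
    rw [hodd.neg_one_zpow, neg_smul, one_smul, eq_neg_iff_add_eq_zero] at h
    have h' : (2 : F) • (c i * c i) = 0 := by rw [two_smul]; exact h
    rcases smul_eq_zero.mp h' with h'' | h''
    · exact absurd h'' h2F
    · exact h''
  -- odd components anticommute
  have hanti : ∀ i j : ℤ, ¬ Even i → ¬ Even j → c i * c j = -(c j * c i) := by
    intro i j hi hj
    have h := hcomm i j (c i) (c j) (hmem i) (hmem j)
    have hodd : Odd (i * j) := (Int.not_even_iff_odd.mp hi).mul (Int.not_even_iff_odd.mp hj)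
    rwa [hodd.neg_one_zpow, neg_smul, one_smul] at h
  -- even components are central among components
  have hcom : ∀ i j : ℤ, Even i → Commute (c i) (c j) := by
    intro i j hi
    have h := hcomm i j (c i) (c j) (hmem i) (hmem j)
    rwa [(hi.mul_right j).neg_one_zpow, one_smul] at h
  set s : Finset ℤ := (DirectSum.decompose 𝒜 x).support with hs
  have hxe' : xe = ∑ i ∈ s.filter (fun i => Even i), c i := by
    rw [hxe, Finset.sum_filter]
  have hxsum : ∑ i ∈ s, c i = x := DirectSum.sum_support_decompose 𝒜 x
  have hxo : x - xe = ∑ i ∈ s.filter (fun i => ¬ Even i), c i := by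
    have h := Finset.sum_filter_add_sum_filter_not s (fun i => Even i) c
    rw [hxe', ← hxsum, ← h]
    abel
  -- the odd part is nilpotent
  have hxo_nilp : IsNilpotent (x - xe) := by
    refine ⟨2 ^ (s.filter (fun i => ¬ Even i)).card, ?_⟩
    rw [hxo]
    exact aux_nilp_sum c _
      (fun i hi j hj => hanti i j (Finset.mem_filter.mp hi).2 (Finset.mem_filter.mp hj).2)
      (fun i hi => hsq i (Finset.mem_filter.mp hi).2)
  -- xe commutes with the odd part
  have hco : Commute xe (x - xe) := by
    rw [hxo, hxe']
    exact Commute.sum_left _ _ _ (fun i hi =>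
      Commute.sum_right _ _ _ (fun j hj => hcom i j (Finset.mem_filter.mp hi).2))
  constructor
  · intro hx
    have hcx : Commute x (x - xe) := by
      have h := hco.add_left (Commute.refl (x - xe))
      rwa [show xe + (x - xe) = x by abel] at h
    have := hcx.isNilpotent_sub hx hxo_nilp
    simpa using this
  · intro he
    have := hco.isNilpotent_add he hxo_nilp
    simpa using this
end

section
/- Let R be a ℤ-graded commutative algebra over a field F of odd characteristic. An element of R is nilpotent if and only if all of its homogeneous components are nilpotent. -/
open scoped DirectSum

open DirectSum in
private lemma aux_top {F R : Type*} [Field F] [Ring R] [Algebra F R]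
    (𝒜 : ℤ → Submodule F R) [GradedAlgebra 𝒜]
    {d : ℤ} {a b : R} (ha : a ∈ 𝒜 d)
    (hb : ∀ k : ℤ, d ≤ k → (decompose 𝒜 b k : R) = 0) :
    ∀ n : ℕ, (∀ k : ℤ, (n : ℤ) * d < k → (decompose 𝒜 ((a + b) ^ n) k : R) = 0)
      ∧ (decompose 𝒜 ((a + b) ^ n) ((n : ℤ) * d) : R) = a ^ n := by
  classical
  intro n
  induction n with
  | zero =>
    have h0 : ((0 : ℕ) : ℤ) * d = 0 := by simp
    rw [h0]
    simp only [pow_zero]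
    exact ⟨fun k hk => decompose_of_mem_ne 𝒜 (SetLike.one_mem_graded 𝒜) hk.ne,
      decompose_of_mem_same 𝒜 (SetLike.one_mem_graded 𝒜)⟩
  | succ n ih =>
    set u := (a + b) ^ n with hu
    -- components of u * b vanish in degrees ≥ (n+1)*d
    have hub : ∀ k : ℤ, ((n : ℤ) + 1) * d ≤ k → (decompose 𝒜 (u * b) k : R) = 0 := by
      intro k hk
      have hbs : u * b = ∑ j ∈ (decompose 𝒜 b).support, u * (decompose 𝒜 b j : R) := by
        conv_lhs => rw [← DirectSum.sum_support_decompose 𝒜 b]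
        rw [Finset.mul_sum]
      have : (decompose 𝒜 (u * b) k : R) = GradedRing.proj 𝒜 k (u * b) := rfl
      rw [this, hbs, map_sum]
      refine Finset.sum_eq_zero fun j hj => ?_
      have hjd : j < d := by
        by_contra h
        exact (DFinsupp.mem_support_iff.mp hj)
          (Subtype.ext (hb j (le_of_not_gt h)))
      have hk' : k = (k - j) + j := by ring
      rw [GradedRing.proj_apply, hk',
        coe_decompose_mul_add_of_right_mem 𝒜 (SetLike.coe_mem (decompose 𝒜 b j)),
        ih.1 (k - j) (by linarith [hk]), zero_mul]
    -- components of u * a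
    have hua : ∀ k : ℤ, (decompose 𝒜 (u * a) ((k - d) + d) : R)
        = (decompose 𝒜 u (k - d) : R) * a := fun k =>
      coe_decompose_mul_add_of_right_mem 𝒜 ha
    have hsplit : ∀ k : ℤ, (decompose 𝒜 ((a + b) ^ (n + 1)) k : R)
        = (decompose 𝒜 (u * a) k : R) + (decompose 𝒜 (u * b) k : R) := by
      intro k
      have h1 : (a + b) ^ (n + 1) = u * a + u * b := by rw [hu, pow_succ, mul_add]
      rw [h1]
      have : ∀ z : R, (decompose 𝒜 z k : R) = GradedRing.proj 𝒜 k z := fun _ => rfl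
      rw [this, this, this, map_add]
    constructor
    · intro k hk
      have hk1 : ((n : ℤ) + 1) * d < k := by push_cast at hk; linarith
      rw [hsplit k, hub k hk1.le]
      have hk' : k = (k - d) + d := by ring
      rw [hk'] at *
      rw [hua k, ih.1 (k - d) (by linarith), zero_mul, add_zero]
    · have hc : ((n + 1 : ℕ) : ℤ) * d = ((n : ℤ) * d) + d := by push_cast; ring
      rw [hsplit, hc, hub _ (by linarith)]
      have h2 : (n : ℤ) * d + d = ((n : ℤ) * d + d - d) + d := by ring
      rw [h2, hua, add_sub_cancel_right, ih.2, add_zero, pow_succ]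

open DirectSum in
private lemma aux_descent {F R : Type*} [Field F] [Ring R] [Algebra F R]
    (𝒜 : ℤ → Submodule F R) [GradedAlgebra 𝒜] :
    ∀ (n : ℕ) (s : Finset ℤ), s.card ≤ n → ∀ y : R,
      (∀ i : ℤ, i ∉ s → (decompose 𝒜 y i : R) = 0) →
      (∀ (i : ℤ) (z : R), Commute ((decompose 𝒜 y i : R)) z) →
      IsNilpotent y → ∀ i : ℤ, IsNilpotent ((decompose 𝒜 y i : R)) := by
  classical
  intro n
  induction n with
  | zero =>
    intro s hs y hsupp _ _ i
    have hse : s = ∅ := Finset.card_eq_zero.mp (Nat.le_zero.mp hs)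
    rw [hsupp i (by simp [hse])]
    exact IsNilpotent.zero
  | succ n ih =>
    intro s hs y hsupp hc hy i
    rcases s.eq_empty_or_nonempty with hse | hse
    · rw [hsupp i (by simp [hse])]
      exact IsNilpotent.zero
    · set d := s.max' hse with hd
      have ha : (decompose 𝒜 y d : R) ∈ 𝒜 d := SetLike.coe_mem _
      set a : R := (decompose 𝒜 y d : R) with haa
      set b : R := y - a with hbb
      have hbdec : ∀ k : ℤ, (decompose 𝒜 b k : R)
          = (decompose 𝒜 y k : R) - (decompose 𝒜 a k : R) := by
        intro k
        rw [hbb]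
        have : ∀ z : R, (decompose 𝒜 z k : R) = GradedRing.proj 𝒜 k z := fun _ => rfl
        rw [this, this, this, map_sub]
      have hbk : ∀ k : ℤ, d ≤ k → (decompose 𝒜 b k : R) = 0 := by
        intro k hk
        rcases eq_or_lt_of_le hk with hkd | hkd
        · rw [hbdec, ← hkd, decompose_of_mem_same 𝒜 ha, sub_self]
        · have hks : k ∉ s := fun hmem => absurd (s.le_max' k hmem) (by omega)
          rw [hbdec, hsupp k hks, decompose_of_mem_ne 𝒜 ha hkd.ne, sub_zero]
      obtain ⟨m, hm⟩ := hy
      have ham : a ^ m = 0 := by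
        have h2 := (aux_top 𝒜 ha hbk m).2
        have hab : a + b = y := by rw [hbb]; abel
        rw [hab, hm] at h2
        simpa using h2.symm
      have hbsupp : ∀ j : ℤ, j ∉ s.erase d → (decompose 𝒜 b j : R) = 0 := by
        intro j hj
        by_cases hjd : j = d
        · rw [hjd, hbdec, decompose_of_mem_same 𝒜 ha, sub_self]
        · have hjs : j ∉ s := fun hmem => hj (Finset.mem_erase.mpr ⟨hjd, hmem⟩)
          rw [hbdec, hsupp j hjs, decompose_of_mem_ne 𝒜 ha (Ne.symm hjd), sub_zero]
      have hbc : ∀ (j : ℤ) (z : R), Commute ((decompose 𝒜 b j : R)) z := by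
        intro j z
        rw [hbdec]
        refine Commute.sub_left (hc j z) ?_
        by_cases hjd : j = d
        · rw [hjd, decompose_of_mem_same 𝒜 ha]; exact hc d z
        · rw [decompose_of_mem_ne 𝒜 ha (Ne.symm hjd)]; exact Commute.zero_left z
      have hbnil : IsNilpotent b := by
        rw [hbb]
        exact Commute.isNilpotent_sub ((hc d y).symm) ⟨m, hm⟩ ⟨m, ham⟩
      have hcard : (s.erase d).card ≤ n := by
        have h4 : (s.erase d).card = s.card - 1 :=
          Finset.card_erase_of_mem (s.max'_mem hse)
        omega
      by_cases hid : i = d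
      · exact hid ▸ ⟨m, ham⟩
      · have h3 := ih (s.erase d) hcard b hbsupp hbc hbnil i
        rwa [hbdec i, decompose_of_mem_ne 𝒜 ha (Ne.symm hid), sub_zero] at h3

/-- In a ℤ-graded commutative algebra over a field of odd characteristic,
an element is nilpotent if and only if all of its homogeneous components are nilpotent. -/
theorem stmt_3 (F : Type*) [Field F] (hF : Odd (ringChar F))
    (R : Type*) [Ring R] [Algebra F R]
    (𝒜 : ℤ → Submodule F R) [GradedAlgebra 𝒜]
    (hcomm : ∀ (i j : ℤ) (x y : R), x ∈ 𝒜 i → y ∈ 𝒜 j →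
      x * y = ((-1 : F) ^ (i * j)) • (y * x))
    (x : R) :
    IsNilpotent x ↔ ∀ i : ℤ, IsNilpotent ((DirectSum.decompose 𝒜 x i : R)) := by
  classical
  have h2 : (2 : F) ≠ 0 := by
    intro h
    have hdvd : ringChar F ∣ 2 := (ringChar.spec F 2).mp (by exact_mod_cast h)
    rcases (Nat.dvd_prime Nat.prime_two).mp hdvd with h1 | h1
    · have : ((1 : ℕ) : F) = 0 := (ringChar.spec F 1).mpr (h1 ▸ dvd_refl _)
      simp at this
    · rw [h1, Nat.odd_iff] at hF; omega
  have half : ∀ r : R, r + r = 0 → r = 0 := by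
    intro r h
    have h' : (2 : F) • r = 0 := by rw [two_smul]; exact h
    calc r = ((2 : F)⁻¹ * 2) • r := by rw [inv_mul_cancel₀ h2, one_smul]
    _ = (2 : F)⁻¹ • ((2 : F) • r) := by rw [mul_smul]
    _ = 0 := by rw [h', smul_zero]
  have hanti : ∀ (i j : ℤ), Odd i → Odd j → ∀ p q : R, p ∈ 𝒜 i → q ∈ 𝒜 j →
      p * q + q * p = 0 := by
    intro i j hi hj p q hp hq
    have h := hcomm i j p q hp hq
    rw [Odd.neg_one_zpow (hi.mul hj), neg_one_smul] at h
    rw [h, neg_add_cancel]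
  have hcentral : ∀ (i : ℤ), Even i → ∀ p : R, p ∈ 𝒜 i → ∀ z : R, Commute p z := by
    intro i hi p hp z
    induction z using DirectSum.Decomposition.inductionOn 𝒜 with
    | zero => exact Commute.zero_right p
    | @homogeneous j m =>
      have h := hcomm i j p m hp m.2
      rw [Even.neg_one_zpow (hi.mul_right j), one_smul] at h
      exact h
    | add z1 z2 h1 h2 => exact h1.add_right h2
  set S := (DirectSum.decompose 𝒜 x).support with hS
  have hSx : ∀ i : ℤ, i ∉ S → (DirectSum.decompose 𝒜 x i : R) = 0 := by
    intro i hi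
    have h := DFinsupp.notMem_support_iff.mp hi
    rw [h]; rfl
  set e : R := ∑ i ∈ S.filter (fun i => Even i), (DirectSum.decompose 𝒜 x i : R) with he
  set o : R := ∑ i ∈ S.filter (fun i => ¬ Even i), (DirectSum.decompose 𝒜 x i : R) with ho
  have hxeo : e + o = x := by
    rw [he, ho, Finset.sum_filter_add_sum_filter_not]
    exact DirectSum.sum_support_decompose 𝒜 x
  have ho2 : o * o = 0 := by
    apply half
    set T := S.filter (fun i => ¬ Even i) with hT
    have h1 : o * o = ∑ i ∈ T, ∑ j ∈ T,
        (DirectSum.decompose 𝒜 x i : R) * (DirectSum.decompose 𝒜 x j : R) := by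
      rw [ho, Finset.sum_mul_sum]
    have h2 : ∀ i ∈ T, ∀ j ∈ T,
        (DirectSum.decompose 𝒜 x i : R) * (DirectSum.decompose 𝒜 x j : R)
        = -((DirectSum.decompose 𝒜 x j : R) * (DirectSum.decompose 𝒜 x i : R)) := by
      intro i hi j hj
      have hi' := Int.not_even_iff_odd.mp (Finset.mem_filter.mp hi).2
      have hj' := Int.not_even_iff_odd.mp (Finset.mem_filter.mp hj).2
      exact eq_neg_of_add_eq_zero_left
        (hanti i j hi' hj' _ _ (SetLike.coe_mem _) (SetLike.coe_mem _))
    calc o * o + o * o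
        = (∑ i ∈ T, ∑ j ∈ T, -((DirectSum.decompose 𝒜 x j : R)
            * (DirectSum.decompose 𝒜 x i : R))) + o * o := by
          rw [h1]
          congr 1
          refine Finset.sum_congr rfl fun i hi => Finset.sum_congr rfl fun j hj => h2 i hi j hj
    _ = -(∑ j ∈ T, ∑ i ∈ T, (DirectSum.decompose 𝒜 x j : R)
            * (DirectSum.decompose 𝒜 x i : R)) + o * o := by
          rw [← Finset.sum_comm]
          simp [Finset.sum_neg_distrib]
    _ = -(o * o) + o * o := by rw [← h1]
    _ = 0 := neg_add_cancel _
  have hec : ∀ z : R, Commute e z := by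
    intro z
    rw [he]
    exact Commute.sum_left _ _ _ fun i hi =>
      hcentral i (Finset.mem_filter.mp hi).2 _ (SetLike.coe_mem _) z
  have hedec : ∀ j : ℤ, (DirectSum.decompose 𝒜 e j : R)
      = if j ∈ S.filter (fun i => Even i) then (DirectSum.decompose 𝒜 x j : R) else 0 := by
    intro j
    have hproj : ∀ z : R, (DirectSum.decompose 𝒜 z j : R) = GradedRing.proj 𝒜 j z :=
      fun _ => rfl
    rw [hproj, he, map_sum]
    have hterm : ∀ i : ℤ, GradedRing.proj 𝒜 j ((DirectSum.decompose 𝒜 x i : R))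
        = if i = j then (DirectSum.decompose 𝒜 x i : R) else 0 := by
      intro i
      rw [GradedRing.proj_apply]
      by_cases hij : i = j
      · subst hij
        rw [if_pos rfl]
        exact DirectSum.decompose_of_mem_same 𝒜 (SetLike.coe_mem _)
      · rw [if_neg hij]
        exact DirectSum.decompose_of_mem_ne 𝒜 (SetLike.coe_mem _) hij
    simp_rw [hterm]
    rw [Finset.sum_ite_eq']
  have hon : IsNilpotent o := ⟨2, by rw [sq]; exact ho2⟩
  constructor
  · intro hx
    have hoe : o = x - e := by rw [← hxeo]; abel
    have hco : Commute x o := by rw [hoe]; exact (Commute.refl x).sub_right (hec x).symm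
    have hen : IsNilpotent e := by
      have h : e = x - o := by rw [← hxeo]; abel
      rw [h]; exact hco.isNilpotent_sub hx hon
    have hesupp : ∀ j : ℤ, j ∉ S → (DirectSum.decompose 𝒜 e j : R) = 0 := by
      intro j hj
      rw [hedec j, if_neg (fun hmem => hj (Finset.mem_filter.mp hmem).1)]
    have hecomp : ∀ (j : ℤ) (z : R), Commute ((DirectSum.decompose 𝒜 e j : R)) z := by
      intro j z
      rw [hedec j]
      by_cases hmem : j ∈ S.filter (fun i => Even i)
      · rw [if_pos hmem]
        exact hcentral j (Finset.mem_filter.mp hmem).2 _ (SetLike.coe_mem _) z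
      · rw [if_neg hmem]; exact Commute.zero_left z
    have hkey := aux_descent 𝒜 S.card S le_rfl e hesupp hecomp hen
    intro i
    by_cases hieven : Even i
    · by_cases hiS : i ∈ S
      · have h := hkey i
        rwa [hedec i, if_pos (Finset.mem_filter.mpr ⟨hiS, hieven⟩)] at h
      · rw [hSx i hiS]; exact IsNilpotent.zero
    · have hodd := Int.not_even_iff_odd.mp hieven
      refine ⟨2, ?_⟩
      rw [sq]
      exact half _ (hanti i i hodd hodd _ _ (SetLike.coe_mem _) (SetLike.coe_mem _))
  · intro hcompnil
    have hen : IsNilpotent e := by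
      rw [he]
      exact Commute.isNilpotent_sum (fun i _ => hcompnil i) fun i j hi _ =>
        hcentral i (Finset.mem_filter.mp hi).2 _ (SetLike.coe_mem _) _
    rw [← hxeo]
    exact (hec o).isNilpotent_add hen hon
end

section
/- Let E/F be a Galois field extension with Galois group G, V a vector space over F, and W an E-linear subspace of V ⊗_F E that is preserved by the action of each g ∈ G (acting on the E tensor factor). Then the natural map (W ∩ V) ⊗_F E → W is an isomorphism; in particular W is spanned over E by its elements lying in V. -/
open scoped TensorProduct

open Polynomial in
lemma fixed_mem_range_aux (F E : Type*) [Field F] [Field E] [Algebra F E] [IsGalois F E]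
    (x : E) (h : ∀ g : E ≃ₐ[F] E, g x = x) : x ∈ (algebraMap F E).range := by
  have hx : IsIntegral F x := Algebra.IsIntegral.isIntegral x
  have hsep : (minpoly F x).Separable := Algebra.IsSeparable.isSeparable F x
  have hsp : Splits ((minpoly F x).map (algebraMap F E)) := Normal.splits inferInstance x
  classical
  by_contra hxF
  have h2 : 2 ≤ (minpoly F x).natDegree := (minpoly.two_le_natDegree_iff hx).mpr hxF
  set q := (minpoly F x).map (algebraMap F E) with hq
  have hcard : q.roots.card = q.natDegree :=
    Polynomial.splits_iff_card_roots.mp hsp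
  have hnd : q.natDegree = (minpoly F x).natDegree := natDegree_map _
  have hnodup : q.roots.Nodup := Polynomial.nodup_roots (hsep.map)
  have hall : ∀ y ∈ q.roots, y = x := by
    intro y hy
    have hy0 : Polynomial.aeval y (minpoly F x) = 0 := by
      have := Polynomial.isRoot_of_mem_roots hy
      rwa [Polynomial.aeval_def, ← Polynomial.eval_map]
    obtain ⟨σ, hσ⟩ := minpoly.exists_algEquiv_of_root (Algebra.IsAlgebraic.isAlgebraic x) hy0
    exact σ.injective (by rw [hσ, h σ])
  have h1 : q.roots.toFinset.card ≤ 1 :=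
    Finset.card_le_one.mpr fun a ha b hb => by
      rw [hall a (Multiset.mem_toFinset.mp ha), hall b (Multiset.mem_toFinset.mp hb)]
  have h3 : q.roots.toFinset.card = q.roots.card := Multiset.toFinset_card_of_nodup hnodup
  omega

/-- Galois descent for subspaces: if `E/F` is Galois, `V` an `F`-vector space, and
`W ⊆ E ⊗_F V` an `E`-subspace preserved by the Galois action on the `E` factor,
then `W` is spanned over `E` by its elements belonging to `V` (i.e. of the form `1 ⊗ v`);
equivalently the natural map `(W ∩ V) ⊗_F E → W` is an isomorphism. -/
theorem stmt_5 (F E : Type*) [Field F] [Field E] [Algebra F E] [IsGalois F E]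
    (V : Type*) [AddCommGroup V] [Module F V]
    (W : Submodule E (E ⊗[F] V))
    (hW : ∀ (g : E ≃ₐ[F] E), ∀ w ∈ W, (LinearMap.rTensor V g.toLinearMap) w ∈ W) :
    W = Submodule.span E
      ((W : Set (E ⊗[F] V)) ∩ Set.range (fun v : V => (1 : E) ⊗ₜ[F] v)) := by
  classical
  set S := Submodule.span E
      ((W : Set (E ⊗[F] V)) ∩ Set.range (fun v : V => (1 : E) ⊗ₜ[F] v)) with hS
  have key : ∀ n : ℕ, ∀ (s : Finset (E × V)) (e : E × V → E) (v : E × V → V),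
      s.card ≤ n → (∑ i ∈ s, e i ⊗ₜ[F] v i) ∈ W → (∑ i ∈ s, e i ⊗ₜ[F] v i) ∈ S := by
    intro n
    induction n with
    | zero =>
      intro s e v hcard _
      rw [Finset.card_eq_zero.mp (Nat.le_zero.mp hcard)]
      simp
    | succ n ih =>
      intro s e v hcard hw
      rcases s.eq_empty_or_nonempty with rfl | ⟨j, hj⟩
      · simp
      by_cases hej : e j = 0
      · have hsum : ∑ i ∈ s, e i ⊗ₜ[F] v i = ∑ i ∈ s.erase j, e i ⊗ₜ[F] v i :=
          (Finset.sum_erase s (by rw [hej, TensorProduct.zero_tmul])).symm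
        rw [hsum] at hw ⊢
        exact ih _ _ _ (by have := Finset.card_erase_of_mem hj; omega) hw
      · set c := e j with hc
        set a : E × V → E := fun i => c⁻¹ * e i with ha
        set w := ∑ i ∈ s, e i ⊗ₜ[F] v i with hwdef
        have haj : a j = 1 := inv_mul_cancel₀ hej
        have hw0 : (c⁻¹ • w) ∈ W := W.smul_mem _ hw
        have hw0eq : c⁻¹ • w = ∑ i ∈ s, a i ⊗ₜ[F] v i := by
          rw [hwdef, Finset.smul_sum]
          exact Finset.sum_congr rfl fun i _ => by
            rw [TensorProduct.smul_tmul', smul_eq_mul]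
        by_cases hF : ∀ i ∈ s, a i ∈ (algebraMap F E).range
        · set f : E × V → F := fun i =>
            if hi : i ∈ s then Classical.choose (hF i hi) else 0 with hf
          have hfspec : ∀ i ∈ s, algebraMap F E (f i) = a i := fun i hi => by
            rw [hf]; simp only [dif_pos hi]; exact Classical.choose_spec (hF i hi)
          have hpure : c⁻¹ • w = (1 : E) ⊗ₜ[F] (∑ i ∈ s, f i • v i) := by
            rw [hw0eq, TensorProduct.tmul_sum]
            refine Finset.sum_congr rfl fun i hi => ?_
            rw [TensorProduct.tmul_smul, TensorProduct.smul_tmul',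
              ← Algebra.algebraMap_eq_smul_one, hfspec i hi]
          have hmem : c⁻¹ • w ∈ S := by
            apply Submodule.subset_span
            exact ⟨hw0, ⟨∑ i ∈ s, f i • v i, hpure.symm⟩⟩
          have : w ∈ S := by
            have := S.smul_mem c hmem
            rwa [smul_inv_smul₀ hej] at this
          exact this
        · push_neg at hF
          obtain ⟨k, hk, hkF⟩ := hF
          have hex : ∃ g : E ≃ₐ[F] E, g (a k) ≠ a k := by
            by_contra hng
            push_neg at hng
            exact hkF (fixed_mem_range_aux F E (a k) hng)
          obtain ⟨g, hg⟩ := hex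
          have hjk : k ≠ j := by
            rintro rfl
            exact hkF (haj ▸ ⟨1, map_one _⟩)
          have hgw : (LinearMap.rTensor V g.toLinearMap) (c⁻¹ • w) ∈ W := hW g _ hw0
          set u := (LinearMap.rTensor V g.toLinearMap) (c⁻¹ • w) - c⁻¹ • w with hu
          have hu_mem : u ∈ W := sub_mem hgw hw0
          have hueq_s : u = ∑ i ∈ s, (g (a i) - a i) ⊗ₜ[F] v i := by
            rw [hu, hw0eq, map_sum, ← Finset.sum_sub_distrib]
            refine Finset.sum_congr rfl fun i _ => ?_
            rw [LinearMap.rTensor_tmul, ← TensorProduct.sub_tmul]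
            rfl
          have hueq : u = ∑ i ∈ s.erase j, (g (a i) - a i) ⊗ₜ[F] v i := by
            rw [hueq_s]
            exact (Finset.sum_erase s (by rw [haj, map_one, sub_self,
              TensorProduct.zero_tmul])).symm
          have hu_S : u ∈ S := by
            rw [hueq] at hu_mem ⊢
            exact ih _ _ _ (by have := Finset.card_erase_of_mem hj; omega) hu_mem
          set d := g (a k) - a k with hd
          have hd0 : d ≠ 0 := sub_ne_zero.mpr hg
          set w1 := c⁻¹ • w - (a k * d⁻¹) • u with hw1
          have hw1_mem : w1 ∈ W := sub_mem hw0 (W.smul_mem _ hu_mem)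
          have hw1eq : w1 = ∑ i ∈ s.erase k,
              (a i - a k * d⁻¹ * (g (a i) - a i)) ⊗ₜ[F] v i := by
            rw [hw1, hw0eq, hueq_s, Finset.smul_sum, ← Finset.sum_sub_distrib]
            have : ∀ i ∈ s, a i ⊗ₜ[F] v i - (a k * d⁻¹) • ((g (a i) - a i) ⊗ₜ[F] v i)
                = (a i - a k * d⁻¹ * (g (a i) - a i)) ⊗ₜ[F] v i := fun i _ => by
              rw [TensorProduct.smul_tmul', smul_eq_mul, ← TensorProduct.sub_tmul]
            rw [Finset.sum_congr rfl this]
            refine (Finset.sum_erase s ?_).symm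
            rw [← hd, mul_assoc, inv_mul_cancel₀ hd0, mul_one, sub_self,
              TensorProduct.zero_tmul]
          have hw1_S : w1 ∈ S := by
            rw [hw1eq] at hw1_mem ⊢
            exact ih _ _ _ (by have := Finset.card_erase_of_mem hk; omega) hw1_mem
          have hw0S : c⁻¹ • w ∈ S := by
            have := add_mem hw1_S (S.smul_mem (a k * d⁻¹) hu_S)
            rwa [hw1, sub_add_cancel] at this
          have : w ∈ S := by
            have := S.smul_mem c hw0S
            rwa [smul_inv_smul₀ hej] at this
          exact this
  refine le_antisymm ?_ (Submodule.span_le.mpr Set.inter_subset_left)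
  intro w hw
  obtain ⟨t, ht⟩ := TensorProduct.exists_finset w
  rw [ht] at hw ⊢
  exact key t.card t Prod.fst Prod.snd le_rfl hw
end

section
/- Let E be a finite separable field extension of F, and A a commutative F-algebra. Then the natural inclusion N(A) ⊗_F E → N(A ⊗_F E) is an isomorphism, where N denotes the nilradical (set of nilpotent elements). -/
open scoped TensorProduct

lemma aux_reduced (F E : Type*) [Field F] [Field E] [Algebra F E]
    [FiniteDimensional F E] [Algebra.IsSeparable F E]
    (B : Type*) [CommRing B] [Algebra F B] [IsReduced B] :
    IsReduced (B ⊗[F] E) := by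
  constructor
  intro x hx
  classical
  let ι := Module.Free.ChooseBasisIndex F E
  let b : Module.Basis ι F E := Module.Free.chooseBasis F E
  let bB : Module.Basis ι B (B ⊗[F] E) := Algebra.TensorProduct.basis B b
  -- trace linear functional
  set t : (B ⊗[F] E) →ₗ[B] B :=
    (LinearMap.trace B (B ⊗[F] E)).comp (LinearMap.mul B (B ⊗[F] E)) with ht
  have hmul : ∀ e : E, LinearMap.mul B (B ⊗[F] E) (1 ⊗ₜ[F] e)
      = (LinearMap.mul F E e).baseChange B := by
    intro e
    apply LinearMap.ext
    intro y
    induction y using TensorProduct.induction_on with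
    | zero => simp
    | tmul a m =>
        simp [Algebra.TensorProduct.tmul_mul_tmul]
    | add u v hu hv => simp [map_add, hu, hv]
  have htr : ∀ e : E, t (1 ⊗ₜ[F] e) = algebraMap F B (Algebra.trace F E e) := by
    intro e
    simp only [ht, LinearMap.comp_apply, hmul, LinearMap.trace_baseChange]
    rfl
  -- key coordinates
  set c : ι → B := fun i => bB.repr x i with hc
  set G : Matrix ι ι F := fun i j => Algebra.traceForm F E (b i) (b j) with hG
  have hkey : ∀ j, (∑ i, c i * algebraMap F B (G i j)) = 0 := by
    intro j
    have hnil : IsNilpotent (x * (1 ⊗ₜ[F] b j)) :=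
      (Commute.all _ _).isNilpotent_mul_right hx
    have h0 : t (x * (1 ⊗ₜ[F] b j)) = 0 := by
      have := LinearMap.isNilpotent_trace_of_isNilpotent
        (R := B) (M := B ⊗[F] E)
        (hnil.map (Algebra.lmul B (B ⊗[F] E)))
      simpa [ht] using this.eq_zero
    rw [← h0]
    have hxrep : x = ∑ i, c i • bB i := (bB.sum_repr x).symm
    calc ∑ i, c i * algebraMap F B (G i j)
        = ∑ i, c i • t ((1 ⊗ₜ[F] b i) * (1 ⊗ₜ[F] b j)) := by
          refine Finset.sum_congr rfl fun i _ => ?_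
          rw [Algebra.TensorProduct.tmul_mul_tmul, one_mul, htr]
          simp [hG, Algebra.traceForm_apply, smul_eq_mul]
      _ = t ((∑ i, c i • bB i) * (1 ⊗ₜ[F] b j)) := by
          rw [Finset.sum_mul, map_sum]
          refine Finset.sum_congr rfl fun i _ => ?_
          rw [smul_mul_assoc, map_smul]
          congr 2
          simp [bB, Algebra.TensorProduct.basis_apply]
      _ = t (x * (1 ⊗ₜ[F] b j)) := by rw [← hxrep]
  -- invertibility of Gram matrix
  have hdet : G.det ≠ 0 := by
    have hnd := traceForm_nondegenerate F E
    have : G = LinearMap.BilinForm.toMatrix b (Algebra.traceForm F E) := by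
      ext i j; simp [hG, LinearMap.BilinForm.toMatrix_apply]
    rw [this]
    exact (LinearMap.BilinForm.nondegenerate_iff_det_ne_zero b).mp hnd
  have hunit : IsUnit ((G.map (algebraMap F B)).det) := by
    have : (G.map (algebraMap F B)).det = algebraMap F B G.det :=
      ((algebraMap F B).map_det G).symm
    rw [this]
    exact (isUnit_iff_ne_zero.mpr hdet).map (algebraMap F B)
  letI := (G.map (algebraMap F B)).invertibleOfIsUnitDet hunit
  have hvec : Matrix.vecMul c (G.map (algebraMap F B)) = 0 := by
    funext j
    simpa [Matrix.vecMul, dotProduct, Matrix.map_apply] using hkey j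
  have hc0 : c = 0 := by
    have := congrArg (fun v => Matrix.vecMul v (⅟(G.map (algebraMap F B)))) hvec
    simpa [Matrix.vecMul_vecMul, mul_invOf_self] using this
  have : bB.repr x = 0 := by
    ext i
    exact congrFun hc0 i
  simpa using bB.repr.map_eq_zero_iff.mp this

/-- For a finite separable field extension `E/F` and a commutative `F`-algebra `A`,
the natural map `N(A) ⊗_F E → N(A ⊗_F E)` is an isomorphism: the base change of the
inclusion of the nilradical is injective, with range exactly the nilradical of `E ⊗_F A`. -/
theorem stmt_6 (F E A : Type*) [Field F] [Field E] [Algebra F E]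
    [FiniteDimensional F E] [Algebra.IsSeparable F E]
    [CommRing A] [Algebra F A] :
    Function.Injective
        (LinearMap.baseChange E ((nilradical A).restrictScalars F).subtype) ∧
      LinearMap.range (LinearMap.baseChange E ((nilradical A).restrictScalars F).subtype) =
        (nilradical (E ⊗[F] A)).restrictScalars E := by
  set S := (nilradical A).restrictScalars F with hS
  have hbc : ⇑(LinearMap.baseChange E S.subtype) = ⇑(LinearMap.lTensor E S.subtype) :=
    LinearMap.baseChange_eq_ltensor _
  constructor
  · -- injectivity from flatness of E over F
    have h := Module.Flat.lTensor_preserves_injective_linearMap (M := E)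
      S.subtype (Submodule.injective_subtype S)
    rw [hbc]
    exact h
  · apply le_antisymm
    · rintro x ⟨y, rfl⟩
      show LinearMap.baseChange E S.subtype y ∈ nilradical (E ⊗[F] A)
      induction y using TensorProduct.induction_on with
      | zero => rw [map_zero]; exact (nilradical (E ⊗[F] A)).zero_mem
      | tmul e a =>
          rw [LinearMap.baseChange_tmul]
          obtain ⟨n, hn⟩ := mem_nilradical.mp a.2
          refine mem_nilradical.mpr ⟨n, ?_⟩
          rw [Algebra.TensorProduct.tmul_pow]
          simp [Submodule.coe_subtype, hn]
      | add u v hu hv =>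
          rw [map_add]
          exact (nilradical (E ⊗[F] A)).add_mem hu hv
    · intro x hx
      have hx' : IsNilpotent x := mem_nilradical.mp hx
      haveI : IsReduced (A ⧸ nilradical A) :=
        (Ideal.isRadical_iff_quotient_reduced (nilradical A)).mp (Ideal.radical_isRadical (0 : Ideal A))
      haveI : IsReduced ((A ⧸ nilradical A) ⊗[F] E) := aux_reduced F E _
      haveI : IsReduced (E ⊗[F] (A ⧸ nilradical A)) :=
        isReduced_of_injective (Algebra.TensorProduct.comm F E (A ⧸ nilradical A)).toRingHom
          (Algebra.TensorProduct.comm F E (A ⧸ nilradical A)).injective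
      set q : A →ₐ[F] A ⧸ nilradical A := Ideal.Quotient.mkₐ F (nilradical A) with hq
      set Φ : E ⊗[F] A →ₐ[F] E ⊗[F] (A ⧸ nilradical A) :=
        Algebra.TensorProduct.map (AlgHom.id F E) q with hΦ
      have hΦlin : ∀ y : E ⊗[F] A, Φ y = LinearMap.lTensor E q.toLinearMap y := by
        intro y
        induction y using TensorProduct.induction_on with
        | zero => simp
        | tmul e a => simp [hΦ, Algebra.TensorProduct.map_tmul]
        | add u v hu hv => rw [map_add, map_add, hu, hv]
      have hΦx : Φ x = 0 := (hx'.map Φ).eq_zero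
      have hexact : Function.Exact S.subtype q.toLinearMap := by
        intro y
        constructor
        · intro hy
          have : y ∈ nilradical A := by
            rwa [← Ideal.Quotient.eq_zero_iff_mem]
          exact ⟨⟨y, this⟩, rfl⟩
        · rintro ⟨⟨z, hz⟩, rfl⟩
          exact Ideal.Quotient.eq_zero_iff_mem.mpr hz
      have hexact' := lTensor_exact E hexact Ideal.Quotient.mk_surjective
      have hmem : x ∈ Set.range (LinearMap.lTensor E S.subtype) := by
        rw [← hexact' x, ← hΦlin x, hΦx]
      obtain ⟨y, hy⟩ := hmem
      exact ⟨y, by rw [hbc]; exact hy⟩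
end

section
/- Let k be an algebraically closed field of characteristic p. Every injective group endomorphism of the additive group (k, +) that is given by a polynomial function (equivalently, an injective endomorphism of the algebraic group G_a over k) has the form u ↦ c·u^{p^d} for some c ∈ k^× and d ≥ 0. -/
/-- Every injective additive-group endomorphism of `(k, +)` (`k` algebraically closed of
characteristic `p`) that is given by a polynomial function has the form
`u ↦ c * u^(p^d)` for some `c ≠ 0` and `d ≥ 0`. -/
theorem stmt_8 (p : ℕ) [Fact p.Prime] (k : Type*) [Field k] [IsAlgClosed k] [CharP k p]
    (f : k →+ k) (P : Polynomial k) (hfP : ∀ u, f u = P.eval u)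
    (hinj : Function.Injective f) :
    ∃ (c : k) (d : ℕ), c ≠ 0 ∧ ∀ u, f u = c * u ^ p ^ d := by
  have hp := Fact.out (p := p.Prime)
  -- f u = 0 → u = 0
  have hker : ∀ u, f u = 0 → u = 0 := fun u hu => hinj (by simp [hu])
  have hf1 : f 1 ≠ 0 := fun h => one_ne_zero (hker 1 h)
  have hP0 : P ≠ 0 := by
    intro h
    apply hf1
    rw [hfP, h, Polynomial.eval_zero]
  -- P = c * X^n
  have hsplit := IsAlgClosed.splits P
  have hroots : ∀ r ∈ P.roots, r = 0 := by
    intro r hr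
    exact hker r (by rw [hfP]; exact (Polynomial.isRoot_of_mem_roots hr))
  set c := P.leadingCoeff with hc
  have hcne : c ≠ 0 := Polynomial.leadingCoeff_ne_zero.mpr hP0
  set n := Multiset.card P.roots with hn
  have hPeq : P = Polynomial.C c * Polynomial.X ^ n := by
    have := hsplit.eq_prod_roots
    rw [this]
    congr 1
    have : Multiset.map (fun a => Polynomial.X - Polynomial.C a) P.roots
        = Multiset.map (fun _ => (Polynomial.X : Polynomial k)) P.roots := by
      apply Multiset.map_congr rfl
      intro r hr
      rw [hroots r hr]; simp
    rw [this, Multiset.map_const', Multiset.prod_replicate]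
  have hfeval : ∀ u, f u = c * u ^ n := by
    intro u; rw [hfP, hPeq]; simp
  -- n ≠ 0
  have hn0 : n ≠ 0 := by
    intro h
    apply hf1
    have := hker 0 (by simp)
    have h1 : f 1 = c * 1 ^ n := hfeval 1
    have h0 : f 0 = c * 0 ^ n := hfeval 0
    rw [h, pow_zero, mul_one] at h0 h1
    rw [h1, ← h0, map_zero]
  obtain ⟨d, m, hpm, hnm⟩ := Nat.exists_eq_pow_mul_and_not_dvd hn0 p hp.ne_one
  have hm0 : m ≠ 0 := by rintro rfl; simp at hnm; exact hn0 hnm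
  -- additivity of x ↦ x^m
  have hadd : ∀ x y : k, (x + y) ^ m = x ^ m + y ^ m := by
    intro x y
    obtain ⟨u, hu⟩ := IsAlgClosed.exists_pow_nat_eq x (n := p ^ d) (pow_pos hp.pos d)
    obtain ⟨v, hv⟩ := IsAlgClosed.exists_pow_nat_eq y (n := p ^ d) (pow_pos hp.pos d)
    have h := f.map_add u v
    rw [hfeval, hfeval, hfeval] at h
    have h' : (u + v) ^ n = u ^ n + v ^ n := by
      exact mul_left_cancel₀ hcne (by rw [h, mul_add])
    rw [hnm] at h'
    rw [pow_mul, pow_mul, pow_mul, add_pow_char_pow, hu, hv] at h'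
    exact h'
  -- m = 1
  have hm1 : m = 1 := by
    by_contra hm1
    have hm2 : 2 ≤ m := by omega
    have hQ : ((Polynomial.X + 1 : Polynomial k) ^ m) = Polynomial.X ^ m + 1 := by
      apply Polynomial.funext
      intro r
      simpa using hadd r 1
    have := congrArg (fun q => Polynomial.coeff q (m - 1)) hQ
    simp only [Polynomial.coeff_X_add_one_pow, Polynomial.coeff_add] at this
    rw [Polynomial.coeff_X_pow, Polynomial.coeff_one] at this
    have hne1 : ¬ (m - 1 = m) := by omega
    have hne2 : ¬ (m - 1 = 0) := by omega
    rw [if_neg hne1, if_neg hne2, add_zero, Nat.choose_symm (show 1 ≤ m by omega), Nat.choose_one_right] at this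
    have : (m : k) = 0 := this
    exact hpm ((CharP.cast_eq_zero_iff k p m).mp this)
  refine ⟨c, d, hcne, fun u => ?_⟩
  rw [hfeval, hnm, hm1, mul_one]
end

section
/- Let P be a finite p-group possessing a central series 1 = P_0 ≤ P_1 ≤ ... ≤ P_k = P of length k < p, such that each P_i is generated by elements of order dividing p. Then P has exponent p, i.e., x^p = 1 for every x ∈ P. -/
namespace HallExp

open Subgroup hiding lowerCentralSeries lowerCentralSeries_zero lowerCentralSeries_antitone

open scoped commutatorElement

universe u

variable {G : Type*} [Group G]

variable {G : Type*} [Group G]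

lemma lcs_succ (n : ℕ) :
    Subgroup.lowerCentralSeries (⊤ : Subgroup G) (n + 1) = ⁅Subgroup.lowerCentralSeries (⊤ : Subgroup G) n, ⊤⁆ := rfl

/-- Three subgroups lemma relative to a normal subgroup. -/
lemma three_subgroups {A B C N : Subgroup G} [N.Normal]
    (h1 : ⁅⁅B, C⁆, A⁆ ≤ N) (h2 : ⁅⁅C, A⁆, B⁆ ≤ N) : ⁅⁅A, B⁆, C⁆ ≤ N := by
  let π := QuotientGroup.mk' N
  have e : ∀ X Y : Subgroup G, ⁅X, Y⁆.map π = ⁅X.map π, Y.map π⁆ := fun X Y =>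
    Subgroup.map_commutator X Y π
  have key := Subgroup.commutator_commutator_eq_bot_of_rotate
    (H₁ := A.map π) (H₂ := B.map π) (H₃ := C.map π) ?_ ?_
  · have : (⁅⁅A, B⁆, C⁆).map π = ⊥ := by rw [e, e]; exact key
    rwa [Subgroup.map_eq_bot_iff, QuotientGroup.ker_mk'] at this
  · rw [← e, ← e, Subgroup.map_eq_bot_iff, QuotientGroup.ker_mk']; exact h1
  · rw [← e, ← e, Subgroup.map_eq_bot_iff, QuotientGroup.ker_mk']; exact h2

lemma lcs_comm_lcs :
    ∀ b a : ℕ, ⁅Subgroup.lowerCentralSeries (⊤ : Subgroup G) a, Subgroup.lowerCentralSeries (⊤ : Subgroup G) b⁆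
      ≤ Subgroup.lowerCentralSeries (⊤ : Subgroup G) (a + b + 1) := by
  intro b
  induction b with
  | zero =>
      intro a
      rw [Subgroup.lowerCentralSeries_zero]
      exact le_of_eq (lcs_succ a).symm
  | succ b ih =>
      intro a
      rw [Subgroup.commutator_comm, lcs_succ]
      have hidx : a + b + 1 + 1 = a + (b + 1) + 1 := by omega
      rw [← hidx]
      apply three_subgroups
      · rw [Subgroup.commutator_comm (⊤ : Subgroup G), ← lcs_succ]
        have := ih (a + 1)
        have hidx2 : a + 1 + b + 1 = a + b + 1 + 1 := by omega
        rwa [hidx2] at this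
      · calc ⁅⁅Subgroup.lowerCentralSeries (⊤ : Subgroup G) a, Subgroup.lowerCentralSeries (⊤ : Subgroup G) b⁆, (⊤ : Subgroup G)⁆
            ≤ ⁅Subgroup.lowerCentralSeries (⊤ : Subgroup G) (a + b + 1), (⊤ : Subgroup G)⁆ :=
              Subgroup.commutator_mono (ih a) le_rfl
          _ = Subgroup.lowerCentralSeries (⊤ : Subgroup G) (a + b + 1 + 1) := (lcs_succ _).symm


/-- The weight filtration: `Γ G 0 = Γ G 1 = ⊤`, `Γ G i = γ_i(G)`. -/
def Γ (G : Type*) [Group G] : ℕ → Subgroup G := fun i => Subgroup.lowerCentralSeries (⊤ : Subgroup G) (i - 1)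

lemma Γ_anti {i j : ℕ} (h : i ≤ j) : Γ G j ≤ Γ G i :=
  Subgroup.lowerCentralSeries_antitone _ (by omega)

lemma Γ_comm (i j : ℕ) : ⁅Γ G i, Γ G j⁆ ≤ Γ G (i + j) := by
  refine le_trans (lcs_comm_lcs (j - 1) (i - 1)) (Subgroup.lowerCentralSeries_antitone _ ?_)
  omega

/-- forward difference of a sequence -/
def Dl (f : ℕ → G) : ℕ → G := fun n => f (n + 1) * (f n)⁻¹

lemma Dl_one : Dl (fun _ : ℕ => (1 : G)) = fun _ => 1 := by
  funext n; simp [Dl]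

/-- truncated polynomiality predicate -/
def Q (s J : ℕ) (f : ℕ → G) : Prop := ∀ j ≤ J, ∀ n, Dl^[j] f n ∈ Γ G (s + j)

lemma Q_mono_level {s' s J : ℕ} {f : ℕ → G} (h : s' ≤ s) (hf : Q s J f) : Q s' J f :=
  fun j hj n => Γ_anti (by omega) (hf j hj n)

lemma Q_mono_J {s J' J : ℕ} {f : ℕ → G} (h : J' ≤ J) (hf : Q s J f) : Q s J' f :=
  fun j hj n => hf j (le_trans hj h) n

lemma Q_Dl {s J : ℕ} {f : ℕ → G} (hf : Q s (J + 1) f) : Q (s + 1) J (Dl f) := by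
  intro j hj n
  have h := hf (j + 1) (by omega) n
  rw [Function.iterate_succ_apply] at h
  have e : s + (j + 1) = s + 1 + j := by omega
  rwa [e] at h

lemma Q_congr {s J : ℕ} {f g : ℕ → G} (h : f = g) (hf : Q s J f) : Q s J g := h ▸ hf

lemma comm_delta_identity (x y F E : G) :
    ⁅F * x, E * y⁆ * ⁅y, x⁆ =
      (F * ⁅x, E⁆ * F⁻¹) *
        (⁅F * E, ⁅x, y⁆⁆ *
          (⁅x, y⁆ * (⁅F, E⁆ * (E * ⁅F, y⁆ * E⁻¹)) * ⁅x, y⁆⁻¹)) := by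
  simp only [commutatorElement_def]
  group

lemma mul_delta_identity (f g : ℕ → G) :
    Dl (fun n => f n * g n) = fun n => Dl f n * (⁅f n, Dl g n⁆ * Dl g n) := by
  funext n
  simp only [Dl, commutatorElement_def]
  group

lemma comm_delta_seq (f g : ℕ → G) :
    Dl (fun n => ⁅f n, g n⁆) =
      fun n =>
        (Dl f n * ⁅f n, Dl g n⁆ * (Dl f n)⁻¹) *
          (⁅Dl f n * Dl g n, ⁅f n, g n⁆⁆ *
            (⁅f n, g n⁆ * (⁅Dl f n, Dl g n⁆ * (Dl g n * ⁅Dl f n, g n⁆ * (Dl g n)⁻¹)) *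
              ⁅f n, g n⁆⁻¹)) := by
  funext n
  have h1 : f (n + 1) = Dl f n * f n := by simp [Dl]
  have h2 : g (n + 1) = Dl g n * g n := by simp [Dl]
  show ⁅f (n+1), g (n+1)⁆ * ⁅f n, g n⁆⁻¹ = _
  rw [h1, h2, commutatorElement_inv, comm_delta_identity, commutatorElement_inv]

/-- The mutual closure theorem for truncated polynomial sequences. -/
theorem master (J : ℕ) :
    (∀ (c : ℕ) (f g : ℕ → G), Q c J f → Q c J g → Q c J (fun n => f n * g n)) ∧
      (∀ (a b : ℕ) (f g : ℕ → G), Q a J f → Q b J g → Q (a + b) J (fun n => ⁅f n, g n⁆)) := by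
  induction J with
  | zero =>
      constructor
      · intro c f g hf hg j hj n
        interval_cases j
        exact mul_mem (hf 0 le_rfl n) (hg 0 le_rfl n)
      · intro a b f g hf hg j hj n
        interval_cases j
        exact Γ_comm a b (Subgroup.commutator_mem_commutator (hf 0 le_rfl n) (hg 0 le_rfl n))
  | succ J ih =>
      obtain ⟨mulJ, commJ⟩ := ih
      have conjJ : ∀ (t σ : ℕ) (M N : ℕ → G), Q t J M → Q σ J N →
          Q t J (fun n => N n * M n * (N n)⁻¹) := by
        intro t σ M N hM hN
        have h1 : Q (σ + t) J (fun n => ⁅N n, M n⁆) := commJ σ t N M hN hM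
        have h1' : Q t J (fun n => ⁅N n, M n⁆) := Q_mono_level (by omega) h1
        have h2 := mulJ t _ _ h1' hM
        apply Q_congr ?_ h2
        funext n
        simp only [commutatorElement_def]
        group
      have QD : ∀ (s : ℕ) (f : ℕ → G), Q s (J + 1) f → Q (s + 1) J (Dl f) := fun s f h => Q_Dl h
      have step : ∀ (s : ℕ) (f : ℕ → G), Q (s + 1) J (Dl f) → (∀ n, f n ∈ Γ G s) →
          Q s (J + 1) f := by
        intro s f hD h0 j hj n
        match j, hj with
        | 0, _ => exact h0 n
        | (j' + 1), hj =>
            rw [Function.iterate_succ_apply]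
            have := hD j' (by omega) n
            have e : s + 1 + j' = s + (j' + 1) := by omega
            rwa [e] at this
      constructor
      · -- multiplication
        intro c f g hf hg
        have hfJ : Q c J f := Q_mono_J (by omega) hf
        have hgJ : Q c J g := Q_mono_J (by omega) hg
        have hDf : Q (c + 1) J (Dl f) := QD c f hf
        have hDg : Q (c + 1) J (Dl g) := QD c g hg
        apply step
        · apply Q_congr (mul_delta_identity f g).symm
          have hc : Q (c + (c + 1)) J (fun n => ⁅f n, Dl g n⁆) := commJ _ _ _ _ hfJ hDg
          have hc' : Q (c + 1) J (fun n => ⁅f n, Dl g n⁆) := Q_mono_level (by omega) hc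
          exact mulJ _ _ _ hDf (mulJ _ _ _ hc' hDg)
        · intro n; exact mul_mem (hf 0 (by omega) n) (hg 0 (by omega) n)
      · -- commutators
        intro a b f g hf hg
        have hfJ : Q a J f := Q_mono_J (by omega) hf
        have hgJ : Q b J g := Q_mono_J (by omega) hg
        have hDf : Q (a + 1) J (Dl f) := QD a f hf
        have hDg : Q (b + 1) J (Dl g) := QD b g hg
        apply step
        · apply Q_congr (comm_delta_seq f g).symm
          -- piece 1 : Dl f ⬝ ⁅f, Dl g⁆ ⬝ (Dl f)⁻¹
          have p1 : Q (a + b + 1) J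
              (fun n => Dl f n * ⁅f n, Dl g n⁆ * (Dl f n)⁻¹) := by
            have := conjJ (a + (b + 1)) (a + 1) (fun n => ⁅f n, Dl g n⁆) (Dl f)
              (commJ _ _ _ _ hfJ hDg) hDf
            exact Q_mono_level (by omega) this
          -- piece 2 : ⁅Dl f * Dl g, ⁅f, g⁆⁆
          have hW : Q 1 J (fun n => Dl f n * Dl g n) := by
            have := mulJ 1 (Dl f) (Dl g) (Q_mono_level (by omega) hDf)
              (Q_mono_level (by omega) hDg)
            exact this
          have hu : Q (a + b) J (fun n => ⁅f n, g n⁆) := commJ _ _ _ _ hfJ hgJ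
          have p2 : Q (a + b + 1) J
              (fun n => ⁅Dl f n * Dl g n, ⁅f n, g n⁆⁆) := by
            have := commJ 1 (a + b) _ _ hW hu
            exact Q_mono_level (by omega) this
          -- piece 3 : ⁅f,g⁆-conjugate of R
          have hR : Q (a + b + 1) J
              (fun n => ⁅Dl f n, Dl g n⁆ * (Dl g n * ⁅Dl f n, g n⁆ * (Dl g n)⁻¹)) := by
            have r1 : Q (a + b + 1) J (fun n => ⁅Dl f n, Dl g n⁆) :=
              Q_mono_level (by omega) (commJ _ _ _ _ hDf hDg)
            have r2 : Q (a + b + 1) J (fun n => Dl g n * ⁅Dl f n, g n⁆ * (Dl g n)⁻¹) := by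
              have := conjJ (a + 1 + b) (b + 1) (fun n => ⁅Dl f n, g n⁆) (Dl g)
                (commJ _ _ _ _ hDf hgJ) hDg
              exact Q_mono_level (by omega) this
            exact mulJ _ _ _ r1 r2
          have p3 : Q (a + b + 1) J
              (fun n => ⁅f n, g n⁆ *
                (⁅Dl f n, Dl g n⁆ * (Dl g n * ⁅Dl f n, g n⁆ * (Dl g n)⁻¹)) * ⁅f n, g n⁆⁻¹) :=
            conjJ (a + b + 1) (a + b) _ _ hR hu
          exact mulJ _ _ _ p1 (mulJ _ _ _ p2 p3)
        · intro n
          exact Γ_comm a b (Subgroup.commutator_mem_commutator (hf 0 (by omega) n) (hg 0 (by omega) n))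


/-- full polynomiality -/
def Pp (s : ℕ) (f : ℕ → G) : Prop := ∀ j n, Dl^[j] f n ∈ Γ G (s + j)

lemma Pp_iff_Q {s : ℕ} {f : ℕ → G} : Pp s f ↔ ∀ J, Q s J f :=
  ⟨fun h J j _ n => h j n, fun h j n => h j j le_rfl n⟩

lemma Pp_mul {c : ℕ} {f g : ℕ → G} (hf : Pp c f) (hg : Pp c g) :
    Pp c (fun n => f n * g n) := by
  rw [Pp_iff_Q] at *
  exact fun J => (master J).1 c f g (hf J) (hg J)

lemma Pp_Dl {s : ℕ} {f : ℕ → G} (hf : Pp s f) : Pp (s + 1) (Dl f) := by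
  intro j n
  have h := hf (j + 1) n
  rw [Function.iterate_succ_apply] at h
  have e : s + (j + 1) = s + 1 + j := by omega
  rwa [e] at h

lemma Pp_mono {s' s : ℕ} {f : ℕ → G} (h : s' ≤ s) (hf : Pp s f) : Pp s' f :=
  fun j n => Γ_anti (by omega) (hf j n)

/-- elementary binomial power sequence -/
def atom (c : G) (k : ℕ) : ℕ → G := fun n => c ^ n.choose k

lemma Dl_atom (c : G) (k : ℕ) : Dl (atom c (k + 1)) = atom c k := by
  funext n
  show c ^ (n + 1).choose (k + 1) * (c ^ n.choose (k + 1))⁻¹ = c ^ n.choose k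
  rw [Nat.choose_succ_succ' n k, pow_add]
  group

lemma Dl_atom_zero (c : G) : Dl (atom c 0) = fun _ => 1 := by
  funext n; simp [Dl, atom]

lemma Dl_iter_atom (c : G) :
    ∀ j k, Dl^[j] (atom c k) = if j ≤ k then atom c (k - j) else fun _ => 1 := by
  intro j
  induction j with
  | zero => intro k; simp
  | succ j ih =>
      intro k
      rw [Function.iterate_succ_apply]
      cases k with
      | zero =>
          rw [Dl_atom_zero, Function.iterate_fixed Dl_one]
          simp
      | succ k =>
          rw [Dl_atom, ih k]
          have h2 : k + 1 - (j + 1) = k - j := by omega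
          simp only [h2, Nat.add_le_add_iff_right]

lemma Pp_atom {c : G} {k : ℕ} (hc : c ∈ Γ G k) : Pp 0 (atom c k) := by
  intro j n
  rw [Dl_iter_atom]
  by_cases h : j ≤ k
  · rw [if_pos h]
    exact Γ_anti (by omega) (pow_mem hc _)
  · rw [if_neg h]
    exact one_mem _

/-- The key extraction lemma: a polynomial sequence vanishing at `0..i` has values
deep in the filtration. -/
lemma key : ∀ (i s : ℕ) (r : ℕ → G), Pp s r → (∀ m ≤ i, r m = 1) →
    ∀ n, r n ∈ Γ G (s + i + 1) := by
  intro i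
  induction i with
  | zero =>
      intro s r hr hv n
      induction n with
      | zero => rw [hv 0 le_rfl]; exact one_mem _
      | succ n ihn =>
          have e : r (n + 1) = Dl r n * r n := by simp [Dl]
          rw [e]
          refine mul_mem ?_ ihn
          have := hr 1 n
          simpa using this
  | succ i ih =>
      intro s r hr hv n
      have h1 : Pp (s + 1) (Dl r) := Pp_Dl hr
      have h2 : ∀ m ≤ i, Dl r m = 1 := by
        intro m hm
        simp [Dl, hv m (by omega), hv (m + 1) (by omega)]
      have h3 := ih (s + 1) (Dl r) h1 h2
      have e2 : s + 1 + i + 1 = s + (i + 1) + 1 := by omega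
      rw [e2] at h3
      induction n with
      | zero => rw [hv 0 (by omega)]; exact one_mem _
      | succ n ihn =>
          have e : r (n + 1) = Dl r n * r n := by simp [Dl]
          rw [e]
          exact mul_mem (h3 n) ihn

section LemmaA

variable (x y : G)

/-- the deviation sequence -/
def qseq (x y : G) : ℕ → G := fun n => atom y⁻¹ 1 n * atom x⁻¹ 1 n * atom (x * y) 1 n

/-- Newton remainders -/
def rem (x y : G) : ℕ → ℕ → G
  | 0 => qseq x y
  | (i + 1) => fun n => rem x y i n * (atom ((rem x y i (i + 1))⁻¹) (i + 1) n)

lemma qseq_zero : qseq x y 0 = 1 := by simp [qseq, atom]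

lemma qseq_one : qseq x y 1 = 1 := by
  simp [qseq, atom]

lemma Pp_qseq : Pp 0 (qseq x y) := by
  have h1 : Pp 0 (atom y⁻¹ 1) := Pp_atom (by exact Subgroup.mem_top _)
  have h2 : Pp 0 (atom x⁻¹ 1) := Pp_atom (by exact Subgroup.mem_top _)
  have h3 : Pp 0 (atom (x * y) 1) := Pp_atom (by exact Subgroup.mem_top _)
  exact Pp_mul (Pp_mul h1 h2) h3

lemma rem_vanish : ∀ i, (Pp 0 (rem x y i)) ∧ (∀ m ≤ i, rem x y i m = 1) ∧
    (rem x y i (i + 1) ∈ Γ G (i + 1)) := by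
  intro i
  induction i with
  | zero =>
      refine ⟨Pp_qseq x y, ?_, ?_⟩
      · intro m hm; interval_cases m; exact qseq_zero x y
      · have := key 0 0 (qseq x y) (Pp_qseq x y)
          (by intro m hm; interval_cases m; exact qseq_zero x y) 1
        simpa [rem] using this
  | succ i ih =>
      obtain ⟨hP, hv, hb⟩ := ih
      have hPnext : Pp 0 (rem x y (i + 1)) := by
        show Pp 0 (fun n => rem x y i n * (atom ((rem x y i (i + 1))⁻¹) (i + 1) n))
        exact Pp_mul hP (Pp_atom (inv_mem hb))
      have hvnext : ∀ m ≤ i + 1, rem x y (i + 1) m = 1 := by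
        intro m hm
        show rem x y i m * (atom ((rem x y i (i + 1))⁻¹) (i + 1) m) = 1
        rcases Nat.lt_or_ge m (i + 1) with h | h
        · have h0 : rem x y i m = 1 := hv m (by omega)
          have h1 : m.choose (i + 1) = 0 := Nat.choose_eq_zero_of_lt h
          simp [atom, h0, h1]
        · have hm1 : m = i + 1 := by omega
          subst hm1
          simp [atom, Nat.choose_self]
      refine ⟨hPnext, hvnext, ?_⟩
      have := key (i + 1) 0 (rem x y (i + 1)) hPnext hvnext (i + 2)
      simpa using this

/-- Main Lemma A -/
theorem lemmaA (p : ℕ) (hp : p.Prime)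
    (HA : ∀ g ∈ ⁅(⊤ : Subgroup G), (⊤ : Subgroup G)⁆, g ^ p = 1)
    (HB : Subgroup.lowerCentralSeries (⊤ : Subgroup G) (p - 1) = ⊥) (x y : G) :
    (x * y) ^ p = x ^ p * y ^ p := by
  have hq : qseq x y p = 1 := by
    -- each correction factor at n = p is trivial, so rem i p = qseq p for all i ≤ p
    have hfac : ∀ i < p, atom ((rem x y i (i + 1))⁻¹) (i + 1) p = 1 := by
      intro i hi
      set b := (rem x y i (i + 1))⁻¹ with hbdef
      have hbmem : b ∈ Γ G (i + 1) := inv_mem (rem_vanish x y i).2.2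
      show b ^ (p.choose (i + 1)) = 1
      rcases Nat.lt_or_ge (i + 1) 2 with h2 | h2
      · -- i = 0 : b = (rem 0 1)⁻¹ = (qseq 1)⁻¹ = 1
        have hi0 : i = 0 := by omega
        subst hi0
        have : rem x y 0 1 = qseq x y 1 := rfl
        rw [hbdef, this, qseq_one, inv_one, one_pow]
      · rcases Nat.lt_or_ge (i + 1) p with hlt | hge
        · -- 2 ≤ i+1 < p : b ∈ Γ 2 has exponent p, and p ∣ choose
          have hb2 : b ∈ Γ G 2 := Γ_anti (by omega) hbmem
          have hbp : b ^ p = 1 := HA b hb2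
          obtain ⟨t, ht⟩ := hp.dvd_choose_self (by omega : i + 1 ≠ 0) hlt
          rw [ht, pow_mul, hbp, one_pow]
        · -- i + 1 ≥ p : b ∈ Γ p = ⊥
          have : b ∈ Γ G p := Γ_anti hge hbmem
          have hbot : Γ G p = ⊥ := HB
          rw [hbot] at this
          simp only [Subgroup.mem_bot] at this
          rw [this, one_pow]
    have hrp : ∀ i ≤ p, rem x y i p = qseq x y p := by
      intro i hi
      induction i with
      | zero => rfl
      | succ i ihi =>
          show rem x y i p * (atom ((rem x y i (i + 1))⁻¹) (i + 1) p) = qseq x y p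
          rw [hfac i (by omega), mul_one, ihi (by omega)]
    have h1 := (rem_vanish x y p).2.1 p le_rfl
    rw [hrp p le_rfl] at h1
    exact h1
  -- unfold qseq p = 1
  have : (y⁻¹) ^ p * (x⁻¹) ^ p * (x * y) ^ p = 1 := by
    have e : qseq x y p = (y⁻¹) ^ p * (x⁻¹) ^ p * (x * y) ^ p := by
      simp [qseq, atom]
    rw [← e, hq]
  calc (x * y) ^ p = ((y⁻¹) ^ p * (x⁻¹) ^ p)⁻¹ * ((y⁻¹) ^ p * (x⁻¹) ^ p * (x * y) ^ p) := by group
    _ = x ^ p * y ^ p := by rw [this]; group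

end LemmaA


theorem aux (p : ℕ) (hp : p.Prime) :
    ∀ k : ℕ, k < p → ∀ (P : Type u) (_ : Group P) (C : Fin (k + 1) → Subgroup P),
      Monotone C → C 0 = ⊥ → C (Fin.last k) = ⊤ →
      (∀ i : Fin k, ⁅(⊤ : Subgroup P), C i.succ⁆ ≤ C i.castSucc) →
      (∀ i : Fin (k + 1), C i = closure {x : P | x ∈ C i ∧ x ^ p = 1}) →
      ∀ x : P, x ^ p = 1 := by
  intro k
  induction k with
  | zero =>
      intro _ P _ C _ hC0 hCk _ _ x
      have hx : x ∈ C (Fin.last 0) := hCk ▸ Subgroup.mem_top x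
      rw [show (Fin.last 0) = 0 from rfl, hC0, Subgroup.mem_bot] at hx
      rw [hx, one_pow]
  | succ k ih =>
      intro hk P hG C hmono hC0 hCk hcentral hgen
      set N : Subgroup P := C (Fin.castSucc (Fin.last k)) with hNdef
      -- restricted series on N
      set D : Fin (k + 1) → Subgroup ↥N := fun i => (C i.castSucc).subgroupOf N with hDdef
      have hCleN : ∀ i : Fin (k + 1), C i.castSucc ≤ N := fun i =>
        hmono (by exact Fin.castSucc_le_castSucc_iff.mpr (Fin.le_last i))
      have hmapD : ∀ i : Fin (k + 1), (D i).map N.subtype = C i.castSucc := by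
        intro i
        rw [hDdef]
        rw [Subgroup.subgroupOf_map_subtype]
        exact inf_eq_left.mpr (hCleN i)
      have hDmono : Monotone D := by
        intro i j hij
        exact Subgroup.comap_mono (hmono (Fin.castSucc_le_castSucc_iff.mpr hij))
      have hD0 : D 0 = ⊥ := by
        show (C (Fin.castSucc (0 : Fin (k + 1)))).subgroupOf N = ⊥
        rw [Fin.castSucc_zero, hC0]
        exact Subgroup.bot_subgroupOf (H := N)
      have hDlast : D (Fin.last k) = ⊤ := by
        rw [hDdef]
        exact Subgroup.subgroupOf_self _
      have hDcentral : ∀ i : Fin k, ⁅(⊤ : Subgroup ↥N), D i.succ⁆ ≤ D i.castSucc := by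
        intro i
        rw [← Subgroup.map_subtype_le_map_subtype, Subgroup.map_commutator, hmapD, hmapD]
        have e1 : (⊤ : Subgroup ↥N).map N.subtype = N := by
          rw [← MonoidHom.range_eq_map, Subgroup.range_subtype]
        rw [e1]
        have h2 : ⁅N, C (i.succ).castSucc⁆ ≤ ⁅(⊤ : Subgroup P), C (Fin.castSucc i).succ⁆ := by
          rw [Fin.succ_castSucc]
          exact Subgroup.commutator_mono le_top le_rfl
        exact h2.trans (hcentral (Fin.castSucc i))
      have hDgen : ∀ i : Fin (k + 1), D i = closure {x : ↥N | x ∈ D i ∧ x ^ p = 1} := by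
        intro i
        apply le_antisymm
        · rw [← Subgroup.map_subtype_le_map_subtype, hmapD, MonoidHom.map_closure]
          rw [hgen i.castSucc]
          apply Subgroup.closure_mono
          rintro x ⟨hx1, hx2⟩
          refine ⟨⟨x, hCleN i ((hgen i.castSucc) ▸ hx1)⟩, ⟨?_, ?_⟩, rfl⟩
          · show (x : P) ∈ C i.castSucc
            exact (hgen i.castSucc) ▸ hx1
          · apply Subtype.ext
            push_cast
            exact hx2
        · exact Subgroup.closure_le _ |>.mpr fun x hx => hx.1
      have hNexp : ∀ x : ↥N, x ^ p = 1 :=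
        ih (by omega) ↥N _ D hDmono hD0 hDlast hDcentral hDgen
      -- hypotheses of Lemma A
      have HA : ∀ g ∈ ⁅(⊤ : Subgroup P), (⊤ : Subgroup P)⁆, g ^ p = 1 := by
        intro g hg
        have hsub : ⁅(⊤ : Subgroup P), (⊤ : Subgroup P)⁆ ≤ N := by
          have h := hcentral (Fin.last k)
          rw [Fin.succ_last, hCk] at h
          exact h
        have hgN : g ∈ N := hsub hg
        have := hNexp ⟨g, hgN⟩
        have h2 : ((⟨g, hgN⟩ : ↥N) ^ p : ↥N) = (1 : ↥N) := this
        have h3 := congrArg (Subtype.val) h2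
        push_cast at h3
        exact h3
      have HB : Subgroup.lowerCentralSeries (⊤ : Subgroup P) (p - 1) = ⊥ := by
        have hstep : ∀ m, m ≤ k + 1 →
            Subgroup.lowerCentralSeries (⊤ : Subgroup P) m ≤ C ⟨k + 1 - m, by omega⟩ := by
          intro m
          induction m with
          | zero =>
              intro _
              have : (⟨k + 1 - 0, by omega⟩ : Fin (k + 2)) = Fin.last (k + 1) := by
                apply Fin.ext; simp
              rw [this, hCk]
              exact le_top
          | succ m ihm =>
              intro hm
              have hm' : m ≤ k + 1 := by omega
              rw [lcs_succ, Subgroup.commutator_comm]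
              have h1 : ⁅(⊤ : Subgroup P), Subgroup.lowerCentralSeries (⊤ : Subgroup P) m⁆ ≤
                  ⁅(⊤ : Subgroup P), C ⟨k + 1 - m, by omega⟩⁆ :=
                Subgroup.commutator_mono le_rfl (ihm hm')
              have h2 := hcentral ⟨k - m, by omega⟩
              have e1 : (⟨k - m, by omega⟩ : Fin (k + 1)).succ = ⟨k + 1 - m, by omega⟩ := by
                apply Fin.ext
                simp only [Fin.val_succ]
                omega
              have e2 : (⟨k - m, by omega⟩ : Fin (k + 1)).castSucc
                  = ⟨k + 1 - (m + 1), by omega⟩ := by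
                apply Fin.ext
                simp only [Fin.coe_castSucc]
                omega
              rw [e1, e2] at h2
              exact h1.trans h2
        have hbot : Subgroup.lowerCentralSeries (⊤ : Subgroup P) (k + 1) = ⊥ := by
          have := hstep (k + 1) le_rfl
          have e : (⟨k + 1 - (k + 1), by omega⟩ : Fin (k + 2)) = 0 := by
            apply Fin.ext; simp
          rw [e, hC0] at this
          exact le_bot_iff.mp this
        have : Subgroup.lowerCentralSeries (⊤ : Subgroup P) (p - 1) ≤ Subgroup.lowerCentralSeries (⊤ : Subgroup P) (k + 1) :=
          Subgroup.lowerCentralSeries_antitone _ (by omega)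
        rw [hbot] at this
        exact le_bot_iff.mp this
      -- the set of p-th roots of 1 is a subgroup
      set K : Subgroup P :=
        { carrier := {x : P | x ^ p = 1}
          one_mem' := one_pow p
          mul_mem' := by
            intro a b ha hb
            show (a * b) ^ p = 1
            rw [lemmaA p hp HA HB a b, ha, hb, one_mul]
          inv_mem' := by
            intro a ha
            show (a⁻¹) ^ p = 1
            rw [inv_pow, ha, inv_one] } with hKdef
      intro x
      have hx : x ∈ C (Fin.last (k + 1)) := hCk ▸ Subgroup.mem_top x
      rw [hgen (Fin.last (k + 1))] at hx
      have : closure {x : P | x ∈ C (Fin.last (k + 1)) ∧ x ^ p = 1} ≤ K :=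
        Subgroup.closure_le _ |>.mpr fun g hg => hg.2
      exact this hx

end HallExp

open scoped commutatorElement



/-- Hall's exponent lemma: a finite `p`-group with a central series of length `k < p`,
each of whose terms is generated by elements of order dividing `p`, has exponent `p`. -/
theorem stmt_10 (p : ℕ) (hp : p.Prime) (P : Type*) [Group P] [Finite P]
    (hP : IsPGroup p P) (k : ℕ) (hk : k < p)
    (C : Fin (k + 1) → Subgroup P)
    (hC0 : C 0 = ⊥) (hCk : C (Fin.last k) = ⊤)
    (hcentral : ∀ i : Fin k, ⁅(⊤ : Subgroup P), C i.succ⁆ ≤ C i.castSucc)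
    (hgen : ∀ i : Fin (k + 1), C i = Subgroup.closure {x : P | x ∈ C i ∧ x ^ p = 1}) :
    ∀ x : P, x ^ p = 1 := by
  classical
  set C' : Fin (k + 1) → Subgroup P :=
    fun i => Subgroup.closure {x : P | ∃ j ≤ i, x ∈ C j} with hC'def
  have hCleC' : ∀ j i : Fin (k + 1), j ≤ i → C j ≤ C' i := by
    intro j i hji x hx
    exact Subgroup.subset_closure ⟨j, hji, hx⟩
  have hC'mono : Monotone C' := by
    intro i i' hii'
    apply Subgroup.closure_mono
    rintro x ⟨j, hj, hxj⟩
    exact ⟨j, le_trans hj hii', hxj⟩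
  have hC'0 : C' 0 = ⊥ := by
    apply le_antisymm _ bot_le
    apply (Subgroup.closure_le _).mpr
    rintro x ⟨j, hj, hxj⟩
    have : j = 0 := Fin.le_zero_iff.mp hj
    subst this
    rw [hC0] at hxj
    exact hxj
  have hC'last : C' (Fin.last k) = ⊤ := by
    apply top_le_iff.mp
    rw [← hCk]
    exact hCleC' (Fin.last k) (Fin.last k) le_rfl
  have hNormal : ∀ i, (C' i).Normal := by
    intro i
    constructor
    intro n hn g
    refine Subgroup.closure_induction
      (p := fun n _ => g * n * g⁻¹ ∈ C' i) ?_ ?_ ?_ ?_ hn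
    · rintro x ⟨j, hji, hxj⟩
      rcases Fin.eq_zero_or_eq_succ j with h0 | ⟨j', rfl⟩
      · subst h0
        rw [hC0, Subgroup.mem_bot] at hxj
        subst hxj
        simpa using one_mem (C' i)
      · have hcomm : ⁅g, x⁆ ∈ C j'.castSucc :=
          hcentral j' (Subgroup.commutator_mem_commutator (Subgroup.mem_top g) hxj)
        show g * x * g⁻¹ ∈ C' i
        have e : g * x * g⁻¹ = ⁅g, x⁆ * x := by group
        rw [e]
        exact mul_mem
          (hCleC' _ i (le_trans (le_of_lt (Fin.castSucc_lt_succ (i := j'))) hji) hcomm)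
          (hCleC' _ i hji hxj)
    · simpa using one_mem (C' i)
    · intro a b _ _ ha hb
      show g * (a * b) * g⁻¹ ∈ C' i
      have e : g * (a * b) * g⁻¹ = (g * a * g⁻¹) * (g * b * g⁻¹) := by group
      rw [e]
      exact mul_mem ha hb
    · intro a _ ha
      show g * a⁻¹ * g⁻¹ ∈ C' i
      have e : g * a⁻¹ * g⁻¹ = (g * a * g⁻¹)⁻¹ := by group
      rw [e]
      exact inv_mem ha
  have hC'central : ∀ i : Fin k, ⁅(⊤ : Subgroup P), C' i.succ⁆ ≤ C' i.castSucc := by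
    intro i
    rw [Subgroup.commutator_le]
    intro g _ x hx
    refine Subgroup.closure_induction
      (p := fun x _ => ⁅g, x⁆ ∈ C' i.castSucc) ?_ ?_ ?_ ?_ hx
    · rintro x ⟨j, hji, hxj⟩
      rcases Fin.eq_zero_or_eq_succ j with h0 | ⟨j', rfl⟩
      · subst h0
        rw [hC0, Subgroup.mem_bot] at hxj
        subst hxj
        show ⁅g, (1 : P)⁆ ∈ C' i.castSucc
        have e : ⁅g, (1 : P)⁆ = 1 := by group
        rw [e]
        exact one_mem _
      · have hcomm : ⁅g, x⁆ ∈ C j'.castSucc :=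
          hcentral j' (Subgroup.commutator_mem_commutator (Subgroup.mem_top g) hxj)
        have hle : j'.castSucc ≤ i.castSucc := by
          have : j' ≤ i := Fin.succ_le_succ_iff.mp hji
          exact Fin.castSucc_le_castSucc_iff.mpr this
        exact hCleC' _ _ hle hcomm
    · show ⁅g, (1 : P)⁆ ∈ C' i.castSucc
      have e : ⁅g, (1 : P)⁆ = 1 := by group
      rw [e]
      exact one_mem _
    · intro a b _ _ ha hb
      show ⁅g, a * b⁆ ∈ C' i.castSucc
      have e : ⁅g, a * b⁆ = ⁅g, a⁆ * (a * ⁅g, b⁆ * a⁻¹) := by group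
      rw [e]
      exact mul_mem ha ((hNormal i.castSucc).conj_mem _ hb a)
    · intro a _ ha
      show ⁅g, a⁻¹⁆ ∈ C' i.castSucc
      have e : ⁅g, a⁻¹⁆ = a⁻¹ * ⁅g, a⁆⁻¹ * (a⁻¹)⁻¹ := by group
      rw [e]
      exact (hNormal i.castSucc).conj_mem _ (inv_mem ha) a⁻¹
  have hC'gen : ∀ i : Fin (k + 1),
      C' i = Subgroup.closure {x : P | x ∈ C' i ∧ x ^ p = 1} := by
    intro i
    apply le_antisymm
    · apply (Subgroup.closure_le _).mpr
      rintro x ⟨j, hj, hxj⟩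
      have hCj : C j ≤ Subgroup.closure {x : P | x ∈ C' i ∧ x ^ p = 1} := by
        refine le_trans (le_of_eq (hgen j)) (Subgroup.closure_mono ?_)
        rintro y ⟨hy1, hy2⟩
        exact ⟨hCleC' j i hj hy1, hy2⟩
      exact hCj hxj
    · exact (Subgroup.closure_le _).mpr fun x hx => hx.1
  exact HallExp.aux p hp k hk P ‹Group P› C' hC'mono hC'0 hC'last hC'central hC'gen
end

section
/- Let A and B be vector spaces over a field, each equipped with a finite filtration 0 = A_0 ≤ A_1 ≤ ... ≤ A_n = A and 0 = B_0 ≤ B_1 ≤ ... ≤ B_n = B, and let f : A → B be a linear map with f(A_i) ⊆ B_i for all i. Then dim ker(f) ≤ dim ker(gr f), where gr f : ⊕_i A_i/A_{i-1} → ⊕_i B_i/B_{i-1} is the induced map on associated graded spaces. -/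
/-- For a filtration-preserving linear map `f : A → B` between finitely filtered vector
spaces, `dim ker f ≤ dim ker (gr f)`, where `gr f` is the induced map on associated graded
spaces (so its kernel's dimension is the sum of the dimensions of the kernels of the maps
`g i : A_{i+1}/A_i → B_{i+1}/B_i` induced by `f`). -/
theorem stmt_11 (F : Type*) [Field F] (A B : Type*) [AddCommGroup A] [Module F A]
    [AddCommGroup B] [Module F B] (n : ℕ)
    (A' : Fin (n + 1) → Submodule F A) (B' : Fin (n + 1) → Submodule F B)
    (hAmono : Monotone A') (hBmono : Monotone B')
    (hA0 : A' 0 = ⊥) (hAn : A' (Fin.last n) = ⊤)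
    (hB0 : B' 0 = ⊥) (hBn : B' (Fin.last n) = ⊤)
    (f : A →ₗ[F] B) (hf : ∀ i : Fin (n + 1), ∀ a ∈ A' i, f a ∈ B' i)
    (g : ∀ i : Fin n,
      (↥(A' i.succ) ⧸ (A' i.castSucc).comap (A' i.succ).subtype) →ₗ[F]
      (↥(B' i.succ) ⧸ (B' i.castSucc).comap (B' i.succ).subtype))
    (hg : ∀ (i : Fin n) (a : A' i.succ),
      g i (Submodule.Quotient.mk a) =
        Submodule.Quotient.mk (⟨f a, hf i.succ a a.2⟩ : B' i.succ)) :
    Module.rank F (LinearMap.ker f) ≤ ∑ i : Fin n, Module.rank F (LinearMap.ker (g i)) := by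
  set K := LinearMap.ker f with hK
  set K' : Fin (n+1) → Submodule F K := fun i => (A' i).comap K.subtype with hK'
  have hKmono : Monotone K' := fun i j h => Submodule.comap_mono (hAmono h)
  -- key step
  have step : ∀ i : Fin n,
      Module.rank F (K' i.succ) ≤
        Module.rank F (K' i.castSucc) + Module.rank F (LinearMap.ker (g i)) := by
    intro i
    set e : ↥(K' i.succ) →ₗ[F] ↥(A' i.succ) :=
      (K.subtype.comp (K' i.succ).subtype).codRestrict (A' i.succ) (fun x => x.2) with he
    set ψ : ↥(K' i.succ) →ₗ[F] (↥(A' i.succ) ⧸ (A' i.castSucc).comap (A' i.succ).subtype) :=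
      (((A' i.castSucc).comap (A' i.succ).subtype).mkQ).comp e with hψ
    have hψ0 : ∀ x, ψ x ∈ LinearMap.ker (g i) := by
      intro x
      have hfx : f ((x : K) : A) = 0 := (x : K).2
      have : ψ x = Submodule.Quotient.mk (e x) := rfl
      rw [LinearMap.mem_ker, this, hg]
      have h0 : (⟨f ((e x : ↥(A' i.succ)) : A), hf i.succ _ (e x).2⟩ : ↥(B' i.succ)) = 0 := by
        apply Subtype.ext
        exact hfx
      rw [h0, Submodule.Quotient.mk_zero]
    set φ : ↥(K' i.succ) →ₗ[F] ↥(LinearMap.ker (g i)) :=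
      ψ.codRestrict (LinearMap.ker (g i)) hψ0 with hφ
    have hker : LinearMap.ker φ = (K' i.castSucc).comap (K' i.succ).subtype := by
      rw [hφ, LinearMap.ker_codRestrict]
      ext x
      simp [hψ, he, Submodule.Quotient.mk_eq_zero, Submodule.mem_comap, hK']
      exact Iff.rfl
    have h1 : LinearMap.rank φ + Module.rank F (LinearMap.ker φ) =
        Module.rank F (K' i.succ) := LinearMap.rank_range_add_rank_ker φ
    have h2 : LinearMap.rank φ ≤ Module.rank F (LinearMap.ker (g i)) := LinearMap.rank_le_range φ
    have h3 : Module.rank F (LinearMap.ker φ) = Module.rank F (K' i.castSucc) := by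
      rw [hker]
      have hle : K' i.castSucc ≤ K' i.succ := hKmono (Fin.castSucc_lt_succ : i.castSucc < i.succ).le
      have e2 := Submodule.comapSubtypeEquivOfLe hle
      show Module.rank F (Submodule.comap (K' i.succ).subtype (K' i.castSucc)) = Module.rank F (K' i.castSucc)
      exact LinearEquiv.rank_eq (R := F) (M := ↥(Submodule.comap (K' i.succ).subtype (K' i.castSucc))) (M₁ := ↥(K' i.castSucc)) e2
    calc Module.rank F (K' i.succ) = LinearMap.rank φ + Module.rank F (LinearMap.ker φ) :=
          h1.symm
      _ ≤ Module.rank F (LinearMap.ker (g i)) + Module.rank F (K' i.castSucc) := by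
          rw [h3]; exact add_le_add h2 le_rfl
      _ = Module.rank F (K' i.castSucc) + Module.rank F (LinearMap.ker (g i)) := add_comm _ _
  -- induction along the filtration
  have main : ∀ j : Fin (n+1), Module.rank F (K' j) ≤
      ∑ i ∈ Finset.univ.filter (fun i : Fin n => (i : ℕ) < (j : ℕ)),
        Module.rank F (LinearMap.ker (g i)) := by
    intro j
    induction j using Fin.induction with
    | zero =>
        have : K' 0 = ⊥ := by show Submodule.comap K.subtype (A' 0) = ⊥; rw [hA0]; simp [Submodule.comap_bot, Submodule.ker_subtype]
        rw [this, rank_bot]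
        exact zero_le
    | succ i ih =>
        have hset : (Finset.univ.filter (fun k : Fin n => (k : ℕ) < ((i.succ : Fin (n+1)) : ℕ)))
            = insert i (Finset.univ.filter
                (fun k : Fin n => (k : ℕ) < ((i.castSucc : Fin (n+1)) : ℕ))) := by
          ext k
          simp [Nat.lt_succ_iff_lt_or_eq, Fin.ext_iff, or_comm]
          simp only [Fin.le_iff_val_le_val, Fin.lt_iff_val_lt_val]; omega
        have hnotmem : i ∉ (Finset.univ.filter
            (fun k : Fin n => (k : ℕ) < ((i.castSucc : Fin (n+1)) : ℕ))) := by simp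
        rw [hset, Finset.sum_insert hnotmem]
        calc Module.rank F (K' i.succ)
            ≤ Module.rank F (K' i.castSucc) + Module.rank F (LinearMap.ker (g i)) := step i
          _ ≤ (∑ k ∈ Finset.univ.filter
                (fun k : Fin n => (k : ℕ) < ((i.castSucc : Fin (n+1)) : ℕ)),
                Module.rank F (LinearMap.ker (g k))) + Module.rank F (LinearMap.ker (g i)) :=
              add_le_add ih le_rfl
          _ = _ := add_comm _ _
  have hlast : K' (Fin.last n) = ⊤ := by show Submodule.comap K.subtype (A' (Fin.last n)) = ⊤; rw [hAn]; simp
  have := main (Fin.last n)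
  rw [hlast, rank_top] at this
  have huniv : (Finset.univ.filter (fun i : Fin n => (i : ℕ) < ((Fin.last n : Fin (n+1)) : ℕ)))
      = Finset.univ := by
    ext k; simp [Fin.is_lt]
  rw [huniv] at this
  exact this
end

section
/- Let Φ be a reduced crystallographic root system with weight lattice Λ ⊇ ℤΦ. If a root α ∈ Φ is divisible in Λ, i.e., α = m·β for some integer m > 1 and β ∈ Λ, then the irreducible component of Φ containing α has type C_n, α is a long root, and m = 2. -/
open scoped RealInnerProductSpace

lemma aux_pos {V : Type*} [NormedAddCommGroup V] [InnerProductSpace ℝ V]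
    {Φ : Set V} (h0 : (0 : V) ∉ Φ) {γ : V} (hγ : γ ∈ Φ) : 0 < ⟪γ, γ⟫ := by
  have hne : γ ≠ 0 := fun h => h0 (h ▸ hγ)
  exact lt_of_le_of_ne real_inner_self_nonneg (Ne.symm (inner_self_ne_zero.mpr hne))

lemma aux_dichotomy {V : Type*} [NormedAddCommGroup V] [InnerProductSpace ℝ V]
    {Φ : Set V} (h0 : (0 : V) ∉ Φ)
    (hcrys : ∀ α ∈ Φ, ∀ β ∈ Φ, ∃ z : ℤ, (2 * (inner ℝ β α : ℝ) / (inner ℝ α α : ℝ)) = (z : ℝ))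
    (hred : ∀ α ∈ Φ, ∀ c : ℝ, c • α ∈ Φ → c = 1 ∨ c = -1)
    {γ δ : V} (hγ : γ ∈ Φ) (hδ : δ ∈ Φ)
    (hW : ∀ ε ∈ Φ, ∃ z : ℤ, ⟪γ, ε⟫ = (z : ℝ) * ⟪ε, ε⟫)
    (hne : ⟪γ, δ⟫ ≠ 0) :
    (δ = γ ∨ δ = -γ) ∨
      (⟪δ, δ⟫ = ⟪γ, γ⟫ / 2 ∧ (⟪γ, δ⟫ = ⟪γ, γ⟫ / 2 ∨ ⟪γ, δ⟫ = -(⟪γ, γ⟫ / 2))) := by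
  have hL : 0 < ⟪γ, γ⟫ := aux_pos h0 hγ
  have hD : 0 < ⟪δ, δ⟫ := aux_pos h0 hδ
  obtain ⟨z, hz⟩ := hW δ hδ
  obtain ⟨w, hw'⟩ := hcrys γ hγ δ hδ
  have hw : 2 * ⟪γ, δ⟫ = (w : ℝ) * ⟪γ, γ⟫ := by
    rw [real_inner_comm δ γ]
    field_simp at hw'; linarith [hw']
  have hzw : ((z * w : ℤ) : ℝ) * (⟪γ, γ⟫ * ⟪δ, δ⟫) = 2 * (⟪γ, δ⟫ * ⟪γ, δ⟫) := by
    push_cast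
    linear_combination (-(w:ℝ) * (inner ℝ γ γ : ℝ)) * hz - (inner ℝ γ δ : ℝ) * hw
  have hCS : ⟪γ, δ⟫ * ⟪γ, δ⟫ ≤ ⟪γ, γ⟫ * ⟪δ, δ⟫ := real_inner_mul_inner_self_le γ δ
  have hsq : 0 < ⟪γ, δ⟫ * ⟪γ, δ⟫ := mul_self_pos.mpr hne
  have hzw_pos : 0 < z * w := by
    by_contra h
    push_neg at h
    have : ((z * w : ℤ) : ℝ) ≤ 0 := by exact_mod_cast h
    nlinarith
  have hzw_le : z * w ≤ 2 := by
    by_contra h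
    push_neg at h
    have : (3 : ℝ) ≤ ((z * w : ℤ) : ℝ) := by exact_mod_cast h
    nlinarith
  interval_cases h : z * w
  · -- z*w = 1 : short case
    right
    have hzu : z = 1 ∧ w = 1 ∨ z = -1 ∧ w = -1 := Int.mul_eq_one_iff_eq_one_or_neg_one.mp h
    rcases hzu with ⟨hz1, hw1⟩ | ⟨hz1, hw1⟩ <;> subst hz1 <;> subst hw1 <;>
      push_cast at hz hw <;> constructor
    · linarith
    · left; linarith
    · linarith
    · right; linarith
  · -- z*w = 2 : proportional case
    left
    have heq : ⟪γ, δ⟫ * ⟪γ, δ⟫ = ⟪γ, γ⟫ * ⟪δ, δ⟫ := by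
      have : ((2 : ℤ) : ℝ) * (⟪γ, γ⟫ * ⟪δ, δ⟫) = 2 * (⟪γ, δ⟫ * ⟪γ, δ⟫) := by
        rw [← h] at *; exact hzw
      push_cast at this; linarith
    set c : ℝ := ⟪γ, δ⟫ / ⟪γ, γ⟫ with hc
    have hprop : δ = c • γ := by
      have hzero : ⟪δ - c • γ, δ - c • γ⟫ = 0 := by
        rw [inner_sub_sub_self, real_inner_smul_left, real_inner_smul_right,
          real_inner_smul_left, real_inner_smul_right, real_inner_comm γ δ, hc]
        field_simp
        linarith [heq]
      have := inner_self_eq_zero.mp hzero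
      have : δ - c • γ = 0 := this
      linear_combination (norm := module) this
    rcases hred γ hγ c (hprop ▸ hδ) with h1 | h1
    · left; rw [hprop, h1, one_smul]
    · right; rw [hprop, h1, neg_smul, one_smul]
section Aux
variable {V : Type*} [NormedAddCommGroup V] [InnerProductSpace ℝ V]

/-- The non-orthogonality edge relation. -/
abbrev Edge19 (Φ : Set V) : V → V → Prop :=
  fun u v => u ∈ Φ ∧ v ∈ Φ ∧ (inner ℝ u v : ℝ) ≠ 0

/-- `γ/2` pairs integrally with all coroots. -/
abbrev Wt19 (Φ : Set V) (γ : V) : Prop :=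
  ∀ ε ∈ Φ, ∃ z : ℤ, (inner ℝ γ ε : ℝ) = (z : ℝ) * (inner ℝ ε ε : ℝ)

/-- Long roots in the component of `α` with the divisibility (weight) property. -/
abbrev LongSet19 (Φ : Set V) (α : V) : Set V :=
  {γ | γ ∈ Φ ∧ Relation.ReflTransGen (Edge19 Φ) α γ ∧
    (inner ℝ γ γ : ℝ) = (inner ℝ α α : ℝ) ∧ Wt19 Φ γ}

lemma aux_reflect {Φ : Set V}
    (hrefl : ∀ α ∈ Φ, ∀ β ∈ Φ,
      β - ((2 * (inner ℝ β α : ℝ) / (inner ℝ α α : ℝ)) : ℝ) • α ∈ Φ)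
    {a b : V} (ha : a ∈ Φ) (hb : b ∈ Φ) (c : ℝ)
    (hc : 2 * (inner ℝ b a : ℝ) / (inner ℝ a a : ℝ) = c) : b - c • a ∈ Φ :=
  hc ▸ hrefl a ha b hb

lemma aux_neg_mem {Φ : Set V} (h0 : (0 : V) ∉ Φ)
    (hrefl : ∀ α ∈ Φ, ∀ β ∈ Φ,
      β - ((2 * (inner ℝ β α : ℝ) / (inner ℝ α α : ℝ)) : ℝ) • α ∈ Φ)
    {γ : V} (hγ : γ ∈ Φ) : -γ ∈ Φ := by
  have hp : (0:ℝ) < ⟪γ, γ⟫ := aux_pos h0 hγ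
  have h := aux_reflect hrefl hγ hγ 2 (by field_simp)
  have h2 : γ - (2:ℝ) • γ = -γ := by module
  rwa [h2] at h

end Aux


section Aux2
variable {V : Type*} [NormedAddCommGroup V] [InnerProductSpace ℝ V]
variable {Φ : Set V} {α : V}

lemma aux_long_neg (h0 : (0 : V) ∉ Φ)
    (hrefl : ∀ α ∈ Φ, ∀ β ∈ Φ,
      β - ((2 * (inner ℝ β α : ℝ) / (inner ℝ α α : ℝ)) : ℝ) • α ∈ Φ)
    {γ : V} (hγ : γ ∈ LongSet19 Φ α) : -γ ∈ LongSet19 Φ α := by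
  obtain ⟨hΦ', hRT, hn, hW⟩ := hγ
  have hLpos : (0:ℝ) < ⟪γ, γ⟫ := aux_pos h0 hΦ'
  refine ⟨aux_neg_mem h0 hrefl hΦ',
    hRT.tail ⟨hΦ', aux_neg_mem h0 hrefl hΦ', ?_⟩, ?_, ?_⟩
  · rw [inner_neg_right]
    exact neg_ne_zero.mpr (ne_of_gt hLpos)
  · rw [inner_neg_neg]; exact hn
  · intro ε hε
    obtain ⟨z, hz⟩ := hW ε hε
    exact ⟨-z, by rw [inner_neg_left]; push_cast; linarith⟩

lemma aux_long_orth (h0 : (0 : V) ∉ Φ)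
    (hcrys : ∀ α ∈ Φ, ∀ β ∈ Φ, ∃ z : ℤ, (2 * (inner ℝ β α : ℝ) / (inner ℝ α α : ℝ)) = (z : ℝ))
    (hred : ∀ α ∈ Φ, ∀ c : ℝ, c • α ∈ Φ → c = 1 ∨ c = -1)
    {γ η : V} (hγ : γ ∈ LongSet19 Φ α) (hη : η ∈ LongSet19 Φ α)
    (h1 : η ≠ γ) (h2 : η ≠ -γ) : (inner ℝ γ η : ℝ) = 0 := by
  by_contra hne
  rcases aux_dichotomy h0 hcrys hred hγ.1 hη.1 hγ.2.2.2 hne with (h | h) | ⟨hs, _⟩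
  · exact h1 h
  · exact h2 h
  · rw [hη.2.2.1, hγ.2.2.1] at hs
    have hp : (0:ℝ) < ⟪γ, γ⟫ := aux_pos h0 hγ.1
    rw [hγ.2.2.1] at hp
    linarith

end Aux2


section Aux3
variable {V : Type*} [NormedAddCommGroup V] [InnerProductSpace ℝ V]
variable {Φ : Set V} {α : V} {N : ℕ}

/-- indices connected by a root `e a + e b`. -/
def Rel19 (Φ : Set V) (e : Fin N → V) (a b : Fin N) : Prop := a = b ∨ e a + e b ∈ Φ

/-- The `C_N`-shape of a root, with indices related to `i`. -/
def Form19 (Φ : Set V) (e : Fin N → V) (i : Fin N) (γ : V) : Prop :=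
  (∃ a, Rel19 Φ e a i ∧ (γ = (2 : ℝ) • e a ∨ γ = -((2 : ℝ) • e a))) ∨
  (∃ a b, a ≠ b ∧ Rel19 Φ e a i ∧ Rel19 Φ e b i ∧
    (γ = e a + e b ∨ γ = e a - e b ∨ γ = -(e a + e b) ∨ γ = -(e a - e b)))

variable (h0 : (0 : V) ∉ Φ)
  (hrefl : ∀ α ∈ Φ, ∀ β ∈ Φ,
      β - ((2 * (inner ℝ β α : ℝ) / (inner ℝ α α : ℝ)) : ℝ) • α ∈ Φ)
  {e : Fin N → V}
  (he : ∀ a b, (inner ℝ (e a) (e b) : ℝ) = if a = b then (inner ℝ α α : ℝ) / 4 else 0)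
  (hmem : ∀ a, (2 : ℝ) • e a ∈ LongSet19 Φ α)

section
include h0 hrefl he hmem

lemma aux_minus {a b : Fin N} (hab : a ≠ b) (h : e a + e b ∈ Φ) : e a - e b ∈ Φ := by
  have hL : (0:ℝ) < ⟪α, α⟫ := by
    have := aux_pos h0 (hmem b).1
    rw [(hmem b).2.2.1] at this; exact this
  have h2b : (2:ℝ) • e b ∈ Φ := (hmem b).1
  have hc : 2 * (inner ℝ (e a + e b) ((2:ℝ) • e b) : ℝ) /
      (inner ℝ ((2:ℝ) • e b) ((2:ℝ) • e b) : ℝ) = 1 := by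
    simp only [inner_add_left, real_inner_smul_left, real_inner_smul_right, he,
      if_neg hab, if_pos rfl, if_true]
    field_simp
    ring
  have h' := aux_reflect hrefl h2b h 1 hc
  have : e a + e b - (1:ℝ) • ((2:ℝ) • e b) = e a - e b := by module
  rwa [this] at h'

lemma aux_plus {a b : Fin N} (hab : a ≠ b) (h : e a - e b ∈ Φ) : e a + e b ∈ Φ := by
  have hL : (0:ℝ) < ⟪α, α⟫ := by
    have := aux_pos h0 (hmem b).1
    rw [(hmem b).2.2.1] at this; exact this
  have h2b : (2:ℝ) • e b ∈ Φ := (hmem b).1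
  have hc : 2 * (inner ℝ (e a - e b) ((2:ℝ) • e b) : ℝ) /
      (inner ℝ ((2:ℝ) • e b) ((2:ℝ) • e b) : ℝ) = -1 := by
    simp only [inner_sub_left, real_inner_smul_left, real_inner_smul_right, he,
      if_neg hab, if_pos rfl, if_true]
    field_simp
    ring
  have h' := aux_reflect hrefl h2b h (-1) hc
  have : e a - e b - (-1:ℝ) • ((2:ℝ) • e b) = e a + e b := by module
  rwa [this] at h'

omit h0 hrefl he hmem in
lemma aux_rel_symm {a b : Fin N} (h : Rel19 Φ e a b) : Rel19 Φ e b a := by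
  rcases h with h | h
  · exact Or.inl h.symm
  · exact Or.inr (by rwa [add_comm])

lemma aux_rel_trans {a b c : Fin N} (hab : Rel19 Φ e a b) (hbc : Rel19 Φ e b c) :
    Rel19 Φ e a c := by
  rcases hab with rfl | hab
  · exact hbc
  rcases hbc with rfl | hbc
  · exact Or.inr hab
  by_cases hac : a = c
  · exact Or.inl hac
  by_cases hab' : a = b
  · subst hab'; exact Or.inr hbc
  by_cases hbc' : b = c
  · subst hbc'; exact Or.inr hab
  refine Or.inr (aux_plus h0 hrefl he hmem hac ?_)
  have hcoef : 2 * (inner ℝ (e a + e b) (e b + e c) : ℝ) /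
      (inner ℝ (e b + e c) (e b + e c) : ℝ) = 1 := by
    have hL : (0:ℝ) < ⟪α, α⟫ := by
      have := aux_pos h0 (hmem b).1
      rw [(hmem b).2.2.1] at this; exact this
    simp only [inner_add_left, inner_add_right, he, if_neg hab', if_neg hac,
      if_neg hbc', if_neg (fun h : c = b => hbc' h.symm), if_pos rfl, if_true]
    field_simp
    ring
  have h' := aux_reflect hrefl hbc hab 1 hcoef
  have heq : (e a + e b) - (1:ℝ) • (e b + e c) = e a - e c := by module
  rwa [heq] at h'

end
end Aux3

section Aux4
variable {V : Type*} [NormedAddCommGroup V] [InnerProductSpace ℝ V]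
variable {Φ : Set V} {α : V} {N : ℕ}
variable (h0 : (0 : V) ∉ Φ)
  (hrefl : ∀ α ∈ Φ, ∀ β ∈ Φ,
      β - ((2 * (inner ℝ β α : ℝ) / (inner ℝ α α : ℝ)) : ℝ) • α ∈ Φ)
  (hcrys : ∀ α ∈ Φ, ∀ β ∈ Φ, ∃ z : ℤ, (2 * (inner ℝ β α : ℝ) / (inner ℝ α α : ℝ)) = (z : ℝ))
  (hred : ∀ α ∈ Φ, ∀ c : ℝ, c • α ∈ Φ → c = 1 ∨ c = -1)
  (hα : α ∈ Φ)
  {e : Fin N → V}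
  (he : ∀ a b, (inner ℝ (e a) (e b) : ℝ) = if a = b then (inner ℝ α α : ℝ) / 4 else 0)
  (hmem : ∀ a, (2 : ℝ) • e a ∈ LongSet19 Φ α)
  (hLrep : ∀ γ ∈ LongSet19 Φ α, ∃ c : Fin N, γ = (2 : ℝ) • e c ∨ γ = -((2 : ℝ) • e c))

include h0 hrefl hcrys hred hα he hmem hLrep in
lemma aux_master (i : Fin N)
    {δ : V} (hδ : δ ∈ Φ) (hRT : Relation.ReflTransGen (Edge19 Φ) α δ)
    {a : Fin N} (hai : Rel19 Φ e a i) (hnea : (inner ℝ (e a) δ : ℝ) ≠ 0) :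
    Form19 Φ e i δ := by
  have hL : (0:ℝ) < ⟪α, α⟫ := aux_pos h0 hα
  obtain ⟨h2aΦ, h2aRT, h2an, h2aW⟩ := hmem a
  have hganz : (inner ℝ ((2:ℝ) • e a) δ : ℝ) ≠ 0 := by
    rw [real_inner_smul_left]; exact mul_ne_zero two_ne_zero hnea
  rcases aux_dichotomy h0 hcrys hred h2aΦ hδ h2aW hganz with (h | h) | ⟨hshort, hpm⟩
  · exact Or.inl ⟨a, hai, Or.inl h⟩
  · exact Or.inl ⟨a, hai, Or.inr h⟩
  rw [h2an] at hshort hpm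
  have key : ∀ γ₁ : V, γ₁ ∈ LongSet19 Φ α →
      (γ₁ = (2:ℝ) • e a ∨ γ₁ = -((2:ℝ) • e a)) →
      (inner ℝ γ₁ δ : ℝ) = ⟪α, α⟫ / 2 → Form19 Φ e i δ := by
    intro γ₁ hγ₁ hγ₁f hhalf
    obtain ⟨hγ₁Φ, hγ₁RT, hγ₁n, hγ₁W⟩ := hγ₁
    have hLne : (inner ℝ α α : ℝ) ≠ 0 := ne_of_gt hL
    have hγ'Φ : γ₁ - (2:ℝ) • δ ∈ Φ := by
      refine aux_reflect hrefl hδ hγ₁Φ 2 ?_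
      rw [hhalf, hshort]; field_simp
    have hδγ' : (inner ℝ δ (γ₁ - (2:ℝ) • δ) : ℝ) = -(⟪α, α⟫ / 2) := by
      rw [inner_sub_right, real_inner_smul_right, real_inner_comm γ₁ δ, hhalf, hshort]
      ring
    have hγ'RT : Relation.ReflTransGen (Edge19 Φ) α (γ₁ - (2:ℝ) • δ) :=
      hRT.tail ⟨hδ, hγ'Φ, by rw [hδγ']; intro hq; rw [neg_eq_zero] at hq; linarith⟩
    have hγ'n : (inner ℝ (γ₁ - (2:ℝ) • δ) (γ₁ - (2:ℝ) • δ) : ℝ) = ⟪α, α⟫ := by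
      rw [inner_sub_sub_self]
      simp only [real_inner_smul_left, real_inner_smul_right]
      rw [real_inner_comm γ₁ δ, hhalf, hshort, hγ₁n]
      ring
    have hγ'W : Wt19 Φ (γ₁ - (2:ℝ) • δ) := by
      intro ε hε
      obtain ⟨z, hz⟩ := hγ₁W ε hε
      obtain ⟨w, hw⟩ := hcrys ε hε δ hδ
      have hεp : (0:ℝ) < ⟪ε, ε⟫ := aux_pos h0 hε
      refine ⟨z - w, ?_⟩
      have hw' : 2 * (inner ℝ δ ε : ℝ) = w * ⟪ε, ε⟫ := by
        field_simp at hw; linarith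
      rw [inner_sub_left, real_inner_smul_left]
      push_cast
      linarith [hz, hw']
    obtain ⟨c, hcf⟩ := hLrep _ ⟨hγ'Φ, hγ'RT, hγ'n, hγ'W⟩
    have horth : (inner ℝ γ₁ (γ₁ - (2:ℝ) • δ) : ℝ) = 0 := by
      rw [inner_sub_right, real_inner_smul_right, hhalf, hγ₁n]; ring
    have hac : a ≠ c := by
      rintro rfl
      rcases hγ₁f with h1 | h1 <;> rcases hcf with h2 | h2 <;>
        rw [h2, h1] at horth <;>
        simp only [inner_neg_left, inner_neg_right, real_inner_smul_left,
          real_inner_smul_right, he, if_pos rfl, neg_neg, neg_eq_zero,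
          eq_self_iff_true, if_true] at horth <;>
        linarith
    have hδeqgen : (2:ℝ) • δ = γ₁ - (γ₁ - (2:ℝ) • δ) := by module
    rcases hγ₁f with h1 | h1 <;> rcases hcf with h2 | h2
    · -- δ = e a - e c
      have hδeq : δ = e a - e c := by
        refine smul_right_injective V (two_ne_zero (α := ℝ)) ?_
        show (2:ℝ) • δ = (2:ℝ) • (e a - e c)
        rw [hδeqgen, h2, h1]; module
      have hplusΦ : e a + e c ∈ Φ := aux_plus h0 hrefl he hmem hac (hδeq ▸ hδ)
      exact Or.inr ⟨a, c, hac, hai,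
        aux_rel_trans h0 hrefl he hmem (aux_rel_symm (Or.inr hplusΦ)) hai, Or.inr (Or.inl hδeq)⟩
    · -- δ = e a + e c
      have hδeq : δ = e a + e c := by
        refine smul_right_injective V (two_ne_zero (α := ℝ)) ?_
        show (2:ℝ) • δ = (2:ℝ) • (e a + e c)
        rw [hδeqgen, h2, h1]; module
      have hplusΦ : e a + e c ∈ Φ := hδeq ▸ hδ
      exact Or.inr ⟨a, c, hac, hai,
        aux_rel_trans h0 hrefl he hmem (aux_rel_symm (Or.inr hplusΦ)) hai, Or.inl hδeq⟩
    · -- δ = -(e a + e c)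
      have hδeq : δ = -(e a + e c) := by
        refine smul_right_injective V (two_ne_zero (α := ℝ)) ?_
        show (2:ℝ) • δ = (2:ℝ) • (-(e a + e c))
        rw [hδeqgen, h2, h1]; module
      have hplusΦ : e a + e c ∈ Φ := by
        have := aux_neg_mem h0 hrefl (hδeq ▸ hδ)
        rwa [neg_neg] at this
      exact Or.inr ⟨a, c, hac, hai,
        aux_rel_trans h0 hrefl he hmem (aux_rel_symm (Or.inr hplusΦ)) hai, Or.inr (Or.inr (Or.inl hδeq))⟩
    · -- δ = -(e a - e c)
      have hδeq : δ = -(e a - e c) := by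
        refine smul_right_injective V (two_ne_zero (α := ℝ)) ?_
        show (2:ℝ) • δ = (2:ℝ) • (-(e a - e c))
        rw [hδeqgen, h2, h1]; module
      have hminusΦ : e a - e c ∈ Φ := by
        have := aux_neg_mem h0 hrefl (hδeq ▸ hδ)
        rwa [neg_neg] at this
      have hplusΦ : e a + e c ∈ Φ := aux_plus h0 hrefl he hmem hac hminusΦ
      exact Or.inr ⟨a, c, hac, hai,
        aux_rel_trans h0 hrefl he hmem (aux_rel_symm (Or.inr hplusΦ)) hai,
        Or.inr (Or.inr (Or.inr hδeq))⟩
  rcases hpm with h | h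
  · exact key ((2:ℝ) • e a) ⟨h2aΦ, h2aRT, h2an, h2aW⟩ (Or.inl rfl) h
  · refine key (-((2:ℝ) • e a)) (aux_long_neg h0 hrefl ⟨h2aΦ, h2aRT, h2an, h2aW⟩)
      (Or.inr rfl) ?_
    rw [inner_neg_left, h]; ring

include h0 hrefl hcrys hred hα he hmem hLrep in
lemma aux_form (i : Fin N)
    (hbase : α = (2 : ℝ) • e i ∨ α = -((2 : ℝ) • e i)) :
    ∀ δ, Relation.ReflTransGen (Edge19 Φ) α δ → Form19 Φ e i δ := by
  intro δ h
  induction h with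
  | refl => exact Or.inl ⟨i, Or.inl rfl, hbase⟩
  | @tail b c hp hedge ih =>
    obtain ⟨hbΦ, hcΦ, hbc⟩ := hedge
    have hcRT : Relation.ReflTransGen (Edge19 Φ) α c := hp.tail ⟨hbΦ, hcΦ, hbc⟩
    rcases ih with ⟨a, hai, hb⟩ | ⟨a, b', hab, hai, hb'i, hb⟩
    · have hnea : (inner ℝ (e a) c : ℝ) ≠ 0 := by
        intro hz; apply hbc
        rcases hb with h | h <;> rw [h] <;>
          simp [real_inner_smul_left, inner_neg_left, hz]
      exact aux_master h0 hrefl hcrys hred hα he hmem hLrep i hcΦ hcRT hai hnea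
    · have hne2 : (inner ℝ (e a) c : ℝ) ≠ 0 ∨ (inner ℝ (e b') c : ℝ) ≠ 0 := by
        by_contra hcon
        push_neg at hcon
        obtain ⟨h1, h2⟩ := hcon
        apply hbc
        rcases hb with h | h | h | h <;> rw [h] <;>
          simp [inner_add_left, inner_sub_left, inner_neg_left, h1, h2]
      rcases hne2 with h | h
      · exact aux_master h0 hrefl hcrys hred hα he hmem hLrep i hcΦ hcRT hai h
      · exact aux_master h0 hrefl hcrys hred hα he hmem hLrep i hcΦ hcRT hb'i h

end Aux4

section Rep
variable {V : Type*} [NormedAddCommGroup V] [InnerProductSpace ℝ V]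

open scoped Classical in
noncomputable def pick19 (s : Set V) : V := if h : s.Nonempty then h.some else 0

noncomputable def rep19 (γ : V) : V := pick19 {γ, -γ}

lemma rep19_mem (γ : V) : rep19 γ = γ ∨ rep19 γ = -γ := by
  have hne : ({γ, -γ} : Set V).Nonempty := ⟨γ, Or.inl rfl⟩
  have : rep19 γ ∈ ({γ, -γ} : Set V) := by
    unfold rep19 pick19
    classical
    rw [dif_pos hne]
    exact hne.some_mem
  simpa using this

lemma rep19_neg (γ : V) : rep19 (-γ) = rep19 γ := by
  unfold rep19
  congr 1
  rw [neg_neg, Set.pair_comm]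

end Rep

/-- In a reduced crystallographic root system `Φ` (in a real inner ℝ product space), if a
root `α` is divisible in the weight lattice, `α = m • β` with `m > 1` and `β` a weight,
then `m = 2` and the irreducible component of `α` (its non-orthogonality connectivity
component) has type `C_N` with `α` a long root: there is a pairwise orthogonal family
`e_1, ..., e_N` of vectors of equal length with the component equal to
`{±e_a ± e_b : a ≠ b} ∪ {±2e_a}` and `α = ±2e_i` for some `i`. -/
theorem stmt_19 (V : Type*) [NormedAddCommGroup V] [InnerProductSpace ℝ V]
    (Φ : Set V) (hfin : Φ.Finite) (h0 : (0 : V) ∉ Φ)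
    (hrefl : ∀ α ∈ Φ, ∀ β ∈ Φ,
      β - ((2 * (inner ℝ β α : ℝ) / (inner ℝ α α : ℝ)) : ℝ) • α ∈ Φ)
    (hcrys : ∀ α ∈ Φ, ∀ β ∈ Φ, ∃ z : ℤ, (2 * (inner ℝ β α : ℝ) / (inner ℝ α α : ℝ)) = (z : ℝ))
    (hred : ∀ α ∈ Φ, ∀ c : ℝ, c • α ∈ Φ → c = 1 ∨ c = -1)
    (α : V) (hα : α ∈ Φ) (m : ℤ) (hm : 1 < m) (β : V)
    (hβ : ∀ γ ∈ Φ, ∃ z : ℤ, (2 * (inner ℝ β γ : ℝ) / (inner ℝ γ γ : ℝ)) = (z : ℝ))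
    (hdiv : α = (m : ℝ) • β) :
    m = 2 ∧
      ∃ (N : ℕ) (e : Fin N → V) (t : ℝ), 0 < t ∧
        (∀ a b : Fin N, (inner ℝ (e a) (e b) : ℝ) = if a = b then t else 0) ∧
        (∃ i : Fin N, α = (2 : ℝ) • e i ∨ α = -((2 : ℝ) • e i)) ∧
        {γ ∈ Φ | Relation.ReflTransGen
            (fun u v => u ∈ Φ ∧ v ∈ Φ ∧ (inner ℝ u v : ℝ) ≠ 0) α γ} =
          {v : V | (∃ a : Fin N, v = (2 : ℝ) • e a ∨ v = -((2 : ℝ) • e a)) ∨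
            ∃ a b : Fin N, a ≠ b ∧
              (v = e a + e b ∨ v = e a - e b ∨ v = -(e a + e b) ∨ v = -(e a - e b))} := by
  classical
  have hL : (0 : ℝ) < ⟪α, α⟫ := aux_pos h0 hα
  have hβ0 : β ≠ 0 := by
    rintro rfl
    rw [smul_zero] at hdiv
    exact h0 (hdiv ▸ hα)
  have hBB : (0 : ℝ) < ⟪β, β⟫ :=
    lt_of_le_of_ne real_inner_self_nonneg (Ne.symm (inner_self_ne_zero.mpr hβ0))
  -- m = 2
  have hm2 : m = 2 := by
    obtain ⟨z, hz⟩ := hβ α hα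
    have h1 : (inner ℝ β α : ℝ) = (m : ℝ) * ⟪β, β⟫ := by
      rw [hdiv, real_inner_smul_right]
    have h2 : (inner ℝ α α : ℝ) = (m : ℝ) ^ 2 * ⟪β, β⟫ := by
      rw [hdiv, real_inner_smul_left, real_inner_smul_right]; ring
    have hmR : (1 : ℝ) < (m : ℝ) := by exact_mod_cast hm
    rw [h1, h2] at hz
    have h3 : (2 : ℝ) = (z : ℝ) * (m : ℝ) := by
      field_simp at hz
      nlinarith [hz]
    have h4 : (2 : ℤ) = z * m := by exact_mod_cast h3
    have hz1 : 0 < z := by nlinarith [h4, hm]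
    nlinarith [h4, hm, hz1]
  refine ⟨hm2, ?_⟩
  -- α/2 = β pairs integrally
  have hWα : Wt19 Φ α := by
    intro ε hε
    obtain ⟨z, hz⟩ := hβ ε hε
    have hεp : (0 : ℝ) < ⟪ε, ε⟫ := aux_pos h0 hε
    refine ⟨z, ?_⟩
    have hαβ : (inner ℝ α ε : ℝ) = 2 * ⟪β, ε⟫ := by
      rw [hdiv, hm2, real_inner_smul_left]; norm_num
    field_simp at hz
    rw [hαβ]
    linarith [hz]
  have hαLong : α ∈ LongSet19 Φ α := ⟨hα, Relation.ReflTransGen.refl, rfl, hWα⟩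
  -- set of representatives of ± pairs of long roots
  set T : Set V := rep19 '' (LongSet19 Φ α) with hTdef
  have hLsub : LongSet19 Φ α ⊆ Φ := fun γ h => h.1
  have hTsub : T ⊆ LongSet19 Φ α := by
    rintro x ⟨γ, hγ, rfl⟩
    rcases rep19_mem γ with h | h <;> rw [h]
    · exact hγ
    · exact aux_long_neg h0 hrefl hγ
  have hTfin : T.Finite := (hfin.subset hLsub).image rep19
  have hTpair : ∀ γ ∈ T, -γ ∉ T := by
    rintro γ ⟨d1, hd1, h1⟩ ⟨d2, hd2, h2⟩
    have k1 : rep19 γ = γ := by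
      rcases rep19_mem d1 with h | h
      · have hd : d1 = γ := h.symm.trans h1
        rw [← hd]; rw [h1, hd]
      · have hd : γ = -d1 := h1.symm.trans h
        calc rep19 γ = rep19 (-d1) := by rw [← hd]
          _ = rep19 d1 := rep19_neg d1
          _ = γ := h1
    have k2 : rep19 γ = -γ := by
      rcases rep19_mem d2 with h | h
      · have hd : d2 = -γ := h.symm.trans h2
        have hd' : γ = -d2 := by rw [hd, neg_neg]
        calc rep19 γ = rep19 (-d2) := by rw [← hd']
          _ = rep19 d2 := rep19_neg d2
          _ = -γ := h2
      · have hd : -γ = -d2 := h2.symm.trans h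
        have hd' : d2 = γ := (neg_injective hd).symm
        rw [hd'] at h2; exact h2
    have hγ0 : γ = -γ := k1.symm.trans k2
    have h2γ : (2 : ℝ) • γ = 0 := by
      rw [two_smul]
      nth_rewrite 2 [hγ0]
      exact add_neg_cancel γ
    have : γ = 0 := by
      rcases smul_eq_zero.mp h2γ with h | h
      · norm_num at h
      · exact h
    have hγΦ : γ ∈ Φ := hLsub (hTsub ⟨d1, hd1, h1⟩)
    exact h0 (this ▸ hγΦ)
  -- enumerate T
  set S : Finset V := hTfin.toFinset with hSdef
  set N : ℕ := S.card with hNdef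
  set f : Fin N → V := fun a => ((S.equivFin.symm a : S) : V) with hfdef
  have hfT : ∀ a, f a ∈ T := fun a => hTfin.mem_toFinset.mp (S.equivFin.symm a).2
  have hfinj : Function.Injective f := by
    intro a b h
    have : S.equivFin.symm a = S.equivFin.symm b := Subtype.ext h
    exact S.equivFin.symm.injective this
  have hfsurj : ∀ x ∈ T, ∃ a, f a = x := by
    intro x hx
    refine ⟨S.equivFin ⟨x, hTfin.mem_toFinset.mpr hx⟩, ?_⟩
    simp [hfdef]
  set e : Fin N → V := fun a => (2⁻¹ : ℝ) • f a with hedef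
  have hfe : ∀ a, (2 : ℝ) • e a = f a := by
    intro a
    rw [hedef]
    rw [smul_smul]
    norm_num
  have hmem : ∀ a, (2 : ℝ) • e a ∈ LongSet19 Φ α := by
    intro a; rw [hfe]; exact hTsub (hfT a)
  have hfnegT : ∀ a b, f a ≠ -(f b) := by
    intro a b h
    exact hTpair (f b) (hfT b) (h ▸ hfT a)
  have he : ∀ a b, (inner ℝ (e a) (e b) : ℝ) = if a = b then (inner ℝ α α : ℝ) / 4 else 0 := by
    intro a b
    by_cases hab : a = b
    · subst hab
      rw [if_pos rfl]
      have h := (hmem a).2.2.1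
      rw [real_inner_smul_left, real_inner_smul_right] at h
      linarith
    · rw [if_neg hab]
      have h1 : f b ≠ f a := fun h => hab (hfinj h).symm
      have h2 : f b ≠ -(f a) := hfnegT b a
      have horth : (inner ℝ (f a) (f b) : ℝ) = 0 :=
        aux_long_orth h0 hcrys hred (hTsub (hfT a)) (hTsub (hfT b)) h1 h2
      show (inner ℝ ((2⁻¹ : ℝ) • f a) ((2⁻¹ : ℝ) • f b) : ℝ) = 0
      rw [real_inner_smul_left, real_inner_smul_right, horth]
      ring
  have hLrep : ∀ γ ∈ LongSet19 Φ α, ∃ c : Fin N, γ = (2 : ℝ) • e c ∨ γ = -((2 : ℝ) • e c) := by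
    intro γ hγ
    obtain ⟨c, hc⟩ := hfsurj (rep19 γ) ⟨γ, hγ, rfl⟩
    rcases rep19_mem γ with h | h
    · exact ⟨c, Or.inl (by rw [hfe, hc, h])⟩
    · exact ⟨c, Or.inr (by rw [hfe, hc, h, neg_neg])⟩
  obtain ⟨i, hbase⟩ := hLrep α hαLong
  have hFORM := aux_form h0 hrefl hcrys hred hα he hmem hLrep i hbase
  -- every index is related to i
  have hrelall : ∀ a, Rel19 Φ e a i := by
    intro a
    have h2a := hmem a
    rcases hFORM _ h2a.2.1 with ⟨a', ha'i, h | h⟩ | ⟨x, y, hxy, hxi, hyi, hcase⟩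
    · have heq : e a = e a' := smul_right_injective V (two_ne_zero (α := ℝ)) h
      have : a = a' := by
        by_contra hne
        have h4 := he a a'
        rw [if_neg hne, heq] at h4
        have h5 := he a' a'
        rw [if_pos rfl] at h5
        rw [h4] at h5
        linarith
      rw [this]; exact ha'i
    · have hh := congrArg (fun v => (inner ℝ ((2 : ℝ) • e a) v : ℝ)) h
      simp only [inner_neg_right, real_inner_smul_left, real_inner_smul_right, he] at hh
      by_cases hq : a = a' <;> simp [hq] at hh <;>
        first
          | linarith [real_inner_self_eq_norm_sq α]
          | exact absurd (hh ▸ hα) h0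
    · rcases hcase with h | h | h | h <;>
        have hh := congrArg (fun v => (inner ℝ v v : ℝ)) h <;>
        simp only [inner_add_left, inner_add_right, inner_sub_left, inner_sub_right,
          inner_neg_left, inner_neg_right, real_inner_smul_left, real_inner_smul_right,
          he, if_pos rfl, neg_neg, eq_self_iff_true, if_true] at hh <;>
        rw [if_neg hxy, if_neg (fun hyx : y = x => hxy hyx.symm)] at hh <;>
        linarith
  -- the component equality
  refine ⟨N, e, ⟪α, α⟫ / 4, by linarith, he, ⟨i, hbase⟩, ?_⟩
  ext γ
  simp only [Set.mem_setOf_eq]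
  constructor
  · rintro ⟨hγΦ, hRT⟩
    rcases hFORM γ hRT with ⟨a, _, h⟩ | ⟨x, y, hxy, _, _, h⟩
    · exact Or.inl ⟨a, h⟩
    · exact Or.inr ⟨x, y, hxy, h⟩
  · rintro (⟨a, h | h⟩ | ⟨x, y, hxy, hcase⟩)
    · rw [h]; exact ⟨(hmem a).1, (hmem a).2.1⟩
    · rw [h]
      have hneg := aux_long_neg h0 hrefl (hmem a)
      exact ⟨hneg.1, hneg.2.1⟩
    · have hxyrel : Rel19 Φ e x y :=
        aux_rel_trans h0 hrefl he hmem (hrelall x) (aux_rel_symm (hrelall y))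
      have hplusxy : e x + e y ∈ Φ := by
        rcases hxyrel with h' | h'
        · exact absurd h' hxy
        · exact h'
      have hminusxy : e x - e y ∈ Φ := aux_minus h0 hrefl he hmem hxy hplusxy
      have hRT2x : Relation.ReflTransGen (Edge19 Φ) α ((2 : ℝ) • e x) := (hmem x).2.1
      have h2xΦ : (2 : ℝ) • e x ∈ Φ := (hmem x).1
      have hip : ∀ v : V, v = e x + e y ∨ v = e x - e y →
          (inner ℝ ((2 : ℝ) • e x) v : ℝ) = ⟪α, α⟫ / 2 := by
        rintro v (rfl | rfl) <;>
          simp only [inner_add_right, inner_sub_right, real_inner_smul_left, he,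
            if_pos rfl, eq_self_iff_true, if_true] <;>
          rw [if_neg hxy] <;> ring
      rcases hcase with h | h | h | h <;> subst h
      · exact ⟨hplusxy, hRT2x.tail ⟨h2xΦ, hplusxy, by rw [hip _ (Or.inl rfl)]; linarith⟩⟩
      · exact ⟨hminusxy, hRT2x.tail ⟨h2xΦ, hminusxy, by rw [hip _ (Or.inr rfl)]; linarith⟩⟩
      · have hnp : -(e x + e y) ∈ Φ := aux_neg_mem h0 hrefl hplusxy
        refine ⟨hnp, hRT2x.tail ⟨h2xΦ, hnp, ?_⟩⟩
        rw [inner_neg_right, hip _ (Or.inl rfl)]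
        intro hq; rw [neg_eq_zero] at hq; linarith
      · have hnm : -(e x - e y) ∈ Φ := aux_neg_mem h0 hrefl hminusxy
        refine ⟨hnm, hRT2x.tail ⟨h2xΦ, hnm, ?_⟩⟩
        rw [inner_neg_right, hip _ (Or.inr rfl)]
        intro hq; rw [neg_eq_zero] at hq; linarith
end
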